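/- arXiv:math/0702418 — 8 statements merged into one kernel-verified Lean document; each statement's English description precedes it below -/
import Mathlib

section
/- Let U^d : [0,∞) → ℝ^p be RCLL with increments in a closed convex cone 𝒰 satisfying u·û₁ ≥ a₀|u| for all u ∈ 𝒰, for some unit vector û₁ and constant a₀ > 0. For k ≥ 1 define U_k(t) = k ∫_{(t-1/k)⁺}^t U^d(s) ds + k(1/k - t)⁺ U^d(0). Then U_k is continuous with increments in 𝒰, and for all 0 ≤ t ≤ T, a₀ |U_k(t)| ≤ U_k(t)·û₁ ≤ U^d(T)·û₁ ≤ |U^d(T)|. -/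
open Set Filter MeasureTheory intervalIntegral

/-- the averaged approximation `U_k` of an RCLL function `U^d`
with increments in a closed convex cone is continuous, has increments in the
cone, and satisfies `a₀|U_k(t)| ≤ U_k(t)·û₁ ≤ U^d(T)·û₁ ≤ |U^d(T)|` for
`0 ≤ t ≤ T`. -/
theorem stmt_3 {p : ℕ} (𝒰 : Set (EuclideanSpace ℝ (Fin p)))
    (hclosed : IsClosed 𝒰) (hconv : Convex ℝ 𝒰)
    (hcone : ∀ a : ℝ, 0 ≤ a → ∀ u ∈ 𝒰, a • u ∈ 𝒰)
    (hatu : EuclideanSpace ℝ (Fin p)) (hunit : ‖hatu‖ = 1)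
    (a0 : ℝ) (ha0 : 0 < a0)
    (hdot : ∀ u ∈ 𝒰, a0 * ‖u‖ ≤ (inner ℝ u hatu : ℝ))
    (Ud : ℝ → EuclideanSpace ℝ (Fin p))
    (hrc : ∀ t : ℝ, 0 ≤ t → ContinuousWithinAt Ud (Ici t) t)
    (hll : ∀ t : ℝ, 0 < t → ∃ L, Tendsto Ud (nhdsWithin t (Iio t)) (nhds L))
    (hUd0 : Ud 0 ∈ 𝒰)
    (hUdinc : ∀ s t : ℝ, 0 ≤ s → s ≤ t → Ud t - Ud s ∈ 𝒰)
    (Uk : ℕ → ℝ → EuclideanSpace ℝ (Fin p))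
    (hUk : ∀ (k : ℕ) (t : ℝ), Uk k t =
      (k : ℝ) • (∫ s in (max (t - 1 / (k : ℝ)) 0)..t, Ud s) +
        ((k : ℝ) * max (1 / (k : ℝ) - t) 0) • Ud 0) :
    ∀ k : ℕ, 1 ≤ k →
      ContinuousOn (Uk k) (Ici 0) ∧
      Uk k 0 ∈ 𝒰 ∧
      (∀ s t : ℝ, 0 ≤ s → s ≤ t → Uk k t - Uk k s ∈ 𝒰) ∧
      (∀ t T : ℝ, 0 ≤ t → t ≤ T →
        a0 * ‖Uk k t‖ ≤ (inner ℝ (Uk k t) hatu : ℝ) ∧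
        (inner ℝ (Uk k t) hatu : ℝ) ≤ (inner ℝ (Ud T) hatu : ℝ) ∧
        (inner ℝ (Ud T) hatu : ℝ) ≤ ‖Ud T‖) := by
  classical
  intro k hk
  have hkR : (1:ℝ) ≤ (k:ℝ) := by exact_mod_cast hk
  have hk0 : (0:ℝ) < (k:ℝ) := lt_of_lt_of_le one_pos hkR
  set c : ℝ := 1 / (k:ℝ) with hcdef
  have hc0 : 0 < c := by positivity
  have hkc : (k:ℝ) * c = 1 := by
    rw [hcdef]
    field_simp
  set V : ℝ → EuclideanSpace ℝ (Fin p) := fun r => Ud (max r 0) with hVdef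
  set g : ℝ → ℝ := fun r => (inner ℝ (V r) hatu : ℝ) with hgdef
  -- basic cone facts
  have h0mem : (0 : EuclideanSpace ℝ (Fin p)) ∈ 𝒰 := by
    simpa using hcone 0 le_rfl _ hUd0
  have hadd : ∀ u ∈ 𝒰, ∀ v ∈ 𝒰, u + v ∈ 𝒰 := by
    intro u hu v hv
    have h2 := hconv hu hv (by norm_num : (0:ℝ) ≤ 1/2) (by norm_num : (0:ℝ) ≤ 1/2)
      (by norm_num)
    have h3 := hcone 2 (by norm_num) _ h2
    have : ((2:ℝ)) • ((1/2 : ℝ) • u + (1/2 : ℝ) • v) = u + v := by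
      rw [smul_add, smul_smul, smul_smul]
      norm_num
    rwa [this] at h3
  have hVinc : ∀ s t : ℝ, s ≤ t → V t - V s ∈ 𝒰 := fun s t h =>
    hUdinc _ _ (le_max_right _ _) (max_le_max h le_rfl)
  have hgmono : Monotone g := by
    intro s t hst
    have h := hdot _ (hVinc s t hst)
    have hn : (0:ℝ) ≤ a0 * ‖V t - V s‖ := mul_nonneg ha0.le (norm_nonneg _)
    have h2 : (0:ℝ) ≤ (inner ℝ (V t - V s) hatu : ℝ) := le_trans hn h
    rw [inner_sub_left] at h2
    have : g s ≤ g t := by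
      simp only [hgdef]
      linarith
    exact this
  have hnorm : ∀ s t : ℝ, s ≤ t → a0 * ‖V t - V s‖ ≤ g t - g s := by
    intro s t hst
    have h := hdot _ (hVinc s t hst)
    rwa [inner_sub_left] at h
  have hkey : ∀ s t : ℝ, s ≤ t → ‖V t - V s‖ ≤ a0⁻¹ * (g t - g s) := by
    intro s t hst
    have h := hnorm s t hst
    have := mul_le_mul_of_nonneg_left h (inv_nonneg.mpr ha0.le)
    rwa [← mul_assoc, inv_mul_cancel₀ (ne_of_gt ha0), one_mul] at this
  have hdist : ∀ s t : ℝ, dist (V s) (V t) ≤ a0⁻¹ * dist (g s) (g t) := by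
    intro s t
    rcases le_total s t with h | h
    · rw [dist_comm, dist_comm (g s)]
      rw [dist_eq_norm, Real.dist_eq, abs_of_nonneg (sub_nonneg.mpr (hgmono h))]
      exact hkey s t h
    · rw [dist_eq_norm, Real.dist_eq, abs_of_nonneg (sub_nonneg.mpr (hgmono h))]
      exact hkey t s h
  -- measurability of V
  have hfac : ∀ s t : ℝ, g s = g t → V s = V t := by
    intro s t h
    have h1 : dist (V s) (V t) ≤ 0 := by
      have := hdist s t
      rw [h] at this
      simpa using this
    exact eq_of_dist_eq_zero (le_antisymm h1 dist_nonneg)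
  set H : ℝ → EuclideanSpace ℝ (Fin p) :=
    fun x => if hx : ∃ r, g r = x then V hx.choose else 0 with hHdef
  have hHg : ∀ r, H (g r) = V r := by
    intro r
    have hx : ∃ r', g r' = g r := ⟨r, rfl⟩
    simp only [hHdef, dif_pos hx]
    exact hfac _ _ hx.choose_spec
  have hHlip : LipschitzOnWith (a0⁻¹).toNNReal H (range g) := by
    apply LipschitzOnWith.of_dist_le_mul
    rintro x ⟨s, rfl⟩ y ⟨t, rfl⟩
    rw [hHg, hHg]
    have h := hdist s t
    rwa [Real.coe_toNNReal _ (inv_nonneg.mpr ha0.le)]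
  obtain ⟨G, hGlip, hGeq⟩ := hHlip.extend_finite_dimension
  have hVeq : V = G ∘ g := by
    funext r
    rw [Function.comp_apply, ← hGeq (mem_range_self r), hHg]
  have hVmeas : Measurable V := by
    rw [hVeq]
    exact hGlip.continuous.measurable.comp hgmono.measurable
  -- interval integrability of V
  have hVint : ∀ a b : ℝ, IntervalIntegrable V volume a b := by
    intro a b
    rw [intervalIntegrable_iff]
    apply Measure.integrableOn_of_bounded
      (M := ‖V (min a b)‖ + a0⁻¹ * (g (max a b) - g (min a b)))
    · rw [uIoc]
      exact (measure_Ioc_lt_top).ne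
    · exact hVmeas.aestronglyMeasurable
    · refine (ae_restrict_iff' measurableSet_uIoc).mpr (ae_of_all _ ?_)
      intro r hr
      rw [uIoc] at hr
      have h1 : min a b ≤ r := le_of_lt hr.1
      have h2 : r ≤ max a b := hr.2
      have e1 : ‖V r‖ ≤ ‖V (min a b)‖ + ‖V r - V (min a b)‖ := by
        calc ‖V r‖ = ‖V (min a b) + (V r - V (min a b))‖ := by rw [add_sub_cancel]
        _ ≤ _ := norm_add_le _ _
      have e2 : ‖V r - V (min a b)‖ ≤ a0⁻¹ * (g r - g (min a b)) := hkey _ _ h1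
      have e3 : a0⁻¹ * (g r - g (min a b)) ≤ a0⁻¹ * (g (max a b) - g (min a b)) := by
        apply mul_le_mul_of_nonneg_left _ (inv_nonneg.mpr ha0.le)
        have := hgmono h2
        linarith
      linarith
  -- the key identity
  have hId : ∀ t : ℝ, 0 ≤ t → Uk k t = (k:ℝ) • ∫ r in (t - c)..t, V r := by
    intro t ht
    have hle : max (t - c) 0 ≤ t := max_le (by linarith) ht
    have hsplit : (∫ r in (t-c)..(max (t-c) 0), V r) + ∫ r in (max (t-c) 0)..t, V r
        = ∫ r in (t-c)..t, V r :=
      integral_add_adjacent_intervals (hVint _ _) (hVint _ _)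
    have h2 : (∫ r in (max (t-c) 0)..t, V r) = ∫ r in (max (t-c) 0)..t, Ud r := by
      apply integral_congr
      intro r hr
      rw [uIcc_of_le hle] at hr
      have h0r : (0:ℝ) ≤ r := le_trans (le_max_right _ _) hr.1
      simp only [hVdef, max_eq_left h0r]
    have h1 : (∫ r in (t-c)..(max (t-c) 0), V r) = (max (c - t) 0) • Ud 0 := by
      rcases le_total (t - c) 0 with h | h
      · have hmax : max (t-c) 0 = 0 := max_eq_right h
        have hmax' : max (c-t) 0 = c - t := max_eq_left (by linarith)
        rw [hmax, hmax']
        have e : (∫ r in (t-c)..(0:ℝ), V r) = ∫ _ in (t-c)..(0:ℝ), Ud 0 := by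
          apply integral_congr
          intro r hr
          rw [uIcc_of_le h] at hr
          simp only [hVdef, max_eq_right hr.2]
        rw [e, intervalIntegral.integral_const]
        congr 1
        ring
      · have hmax : max (t-c) 0 = t - c := max_eq_left h
        have hmax' : max (c-t) 0 = 0 := max_eq_right (by linarith)
        rw [hmax, hmax', integral_same, zero_smul]
    rw [hUk, ← hcdef, ← hsplit, h1, h2, smul_add, smul_smul]
    abel
  -- continuity
  have hcont : ContinuousOn (Uk k) (Ici 0) := by
    have hP : Continuous fun t : ℝ => ∫ r in (0:ℝ)..t, V r :=
      intervalIntegral.continuous_primitive hVint 0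
    have hPc : Continuous fun t : ℝ => ∫ r in (0:ℝ)..(t - c), V r :=
      hP.comp (continuous_id.sub continuous_const)
    have hF : Continuous fun t : ℝ =>
        (k:ℝ) • ((∫ r in (0:ℝ)..t, V r) - ∫ r in (0:ℝ)..(t-c), V r) :=
      ((hP.sub hPc).const_smul (k:ℝ))
    apply ContinuousOn.congr hF.continuousOn
    intro t ht
    rw [hId t ht]
    congr 1
    exact (integral_interval_sub_left (hVint 0 t) (hVint 0 (t-c))).symm
  -- Uk k 0 = Ud 0
  have hU0 : Uk k 0 = Ud 0 := by
    rw [hUk]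
    have h1 : max (0 - 1/(k:ℝ)) 0 = 0 := max_eq_right (by rw [← hcdef]; linarith)
    have h2 : max (1/(k:ℝ) - 0) 0 = 1/(k:ℝ) := by
      rw [sub_zero]
      exact max_eq_left (by rw [← hcdef]; linarith)
    rw [h1, h2, integral_same, smul_zero, zero_add, mul_one_div_cancel (ne_of_gt hk0),
      one_smul]
  -- increments
  have hWint : ∀ s t : ℝ, IntervalIntegrable (fun r => V (r - c)) volume s t := by
    intro s t
    have := (hVint (s - c) (t - c)).comp_sub_right c
    simpa using this
  have hinc : ∀ s t : ℝ, 0 ≤ s → s ≤ t → Uk k t - Uk k s ∈ 𝒰 := by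
    intro s t hs hst
    have ht : 0 ≤ t := hs.trans hst
    rcases eq_or_lt_of_le hst with rfl | hlt
    · simpa using h0mem
    rw [hId s hs, hId t ht, ← smul_sub]
    have a1 : (∫ r in (s-c)..(t-c), V r) + ∫ r in (t-c)..t, V r = ∫ r in (s-c)..t, V r :=
      integral_add_adjacent_intervals (hVint _ _) (hVint _ _)
    have a2 : (∫ r in (s-c)..s, V r) + ∫ r in s..t, V r = ∫ r in (s-c)..t, V r :=
      integral_add_adjacent_intervals (hVint _ _) (hVint _ _)
    have a3 : (∫ r in s..t, V (r - c)) = ∫ r in (s-c)..(t-c), V r :=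
      integral_comp_sub_right V c
    have e1 : (∫ r in (t-c)..t, V r) - ∫ r in (s-c)..s, V r
        = ∫ r in s..t, (V r - V (r - c)) := by
      rw [integral_sub (hVint s t) (hWint s t), a3]
      have b1 : (∫ r in (t-c)..t, V r)
          = (∫ r in (s-c)..t, V r) - ∫ r in (s-c)..(t-c), V r := eq_sub_of_add_eq' a1
      have b2 : (∫ r in s..t, V r)
          = (∫ r in (s-c)..t, V r) - ∫ r in (s-c)..s, V r := eq_sub_of_add_eq' a2
      rw [b1, b2]
      abel
    rw [e1, integral_of_le hst]
    have hIoc : IntegrableOn (fun r => V r - V (r - c)) (Ioc s t) volume :=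
      (intervalIntegrable_iff_integrableOn_Ioc_of_le hst).mp
        ((hVint s t).sub (hWint s t))
    have hμ0 : volume (Ioc s t) ≠ 0 := by
      rw [Real.volume_Ioc]
      exact (ENNReal.ofReal_pos.mpr (by linarith)).ne'
    have hμt : volume (Ioc s t) ≠ ⊤ := (measure_Ioc_lt_top).ne
    have havg : (⨍ r in Ioc s t, (V r - V (r - c)) ∂volume) ∈ 𝒰 := by
      apply hconv.set_average_mem hclosed hμ0 hμt _ hIoc
      exact Eventually.of_forall fun r => hVinc _ _ (by linarith)
    have hrepr : (∫ r in Ioc s t, (V r - V (r-c)) ∂volume)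
        = (volume (Ioc s t)).toReal • ⨍ r in Ioc s t, (V r - V (r - c)) ∂volume := by
      rw [setAverage_eq, measureReal_def, smul_inv_smul₀]
      refine (ENNReal.toReal_pos hμ0 hμt).ne'
    rw [hrepr, smul_smul]
    exact hcone _ (mul_nonneg (Nat.cast_nonneg k) ENNReal.toReal_nonneg) _ havg
  refine ⟨hcont, hU0 ▸ hUd0, hinc, ?_⟩
  -- the inequalities
  intro t T ht hT
  have hT0 : 0 ≤ T := ht.trans hT
  have hUmem : Uk k t ∈ 𝒰 := by
    have h := hadd _ (hU0 ▸ hUd0 : Uk k 0 ∈ 𝒰) _ (hinc 0 t le_rfl ht)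
    simpa using h
  have hgint : ∀ a b : ℝ, IntervalIntegrable g volume a b := fun a b =>
    hgmono.intervalIntegrable
  have hinner : (inner ℝ (Uk k t) hatu : ℝ) = (k:ℝ) * ∫ r in (t-c)..t, g r := by
    rw [hId t ht, real_inner_smul_left]
    congr 1
    rw [real_inner_comm]
    have hcc := ContinuousLinearMap.intervalIntegral_comp_comm (innerSL ℝ hatu)
      (hVint (t-c) t)
    simp only [innerSL_apply_apply] at hcc
    rw [← hcc]
    apply integral_congr
    intro r _
    simp only [hgdef]
    exact real_inner_comm _ _
  have hbound : ∀ r ∈ Icc (t - c) t, g r ≤ (inner ℝ (Ud T) hatu : ℝ) := by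
    intro r hr
    have hmem : Ud T - V r ∈ 𝒰 := by
      apply hUdinc _ _ (le_max_right _ _)
      exact max_le (le_trans hr.2 hT) hT0
    have h := hdot _ hmem
    have hn : (0:ℝ) ≤ a0 * ‖Ud T - V r‖ := mul_nonneg ha0.le (norm_nonneg _)
    have h2 : (0:ℝ) ≤ (inner ℝ (Ud T - V r) hatu : ℝ) := le_trans hn h
    rw [inner_sub_left] at h2
    simp only [hgdef]
    linarith
  have hint2 : (inner ℝ (Uk k t) hatu : ℝ) ≤ (inner ℝ (Ud T) hatu : ℝ) := by
    rw [hinner]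
    have hmono := integral_mono_on (by linarith : t - c ≤ t) (hgint (t-c) t)
      (intervalIntegrable_const (c := (inner ℝ (Ud T) hatu : ℝ))) hbound
    rw [intervalIntegral.integral_const] at hmono
    have : (k:ℝ) * ∫ r in (t-c)..t, g r
        ≤ (k:ℝ) * ((t - (t - c)) • (inner ℝ (Ud T) hatu : ℝ)) :=
      mul_le_mul_of_nonneg_left hmono (le_of_lt hk0)
    calc (k:ℝ) * ∫ r in (t-c)..t, g r
        ≤ (k:ℝ) * ((t - (t - c)) • (inner ℝ (Ud T) hatu : ℝ)) := this
      _ = ((k:ℝ) * c) * (inner ℝ (Ud T) hatu : ℝ) := by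
          simp only [smul_eq_mul]; ring
      _ = (inner ℝ (Ud T) hatu : ℝ) := by rw [hkc, one_mul]
  refine ⟨hdot _ hUmem, hint2, ?_⟩
  calc (inner ℝ (Ud T) hatu : ℝ) ≤ ‖Ud T‖ * ‖hatu‖ := real_inner_le_norm _ _
    _ = ‖Ud T‖ := by rw [hunit, mul_one]
end

section
/- Let f : [0,∞) → ℝ be an RCLL function and for k ≥ 1 define f̄_k(t) = k ∫_{(t-1/k)⁺}^t f(s) ds + k(1/k - t)⁺ f(0). Then f̄_k(t) → f(t-) as k → ∞ for every t > 0, and f̄_k(0) = f(0). In particular f̄_k(t) → f(t) for all but countably many t. -/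
open Set Filter MeasureTheory Topology

lemma aux_measurable_of_rcll (F : ℝ → ℝ) (h : ∀ x : ℝ, ContinuousWithinAt F (Ici x) x) :
    Measurable F := by
  have hg : ∀ n : ℕ, Measurable (fun x : ℝ => F ((⌈x * (n+1 : ℝ)⌉ : ℤ) / (n+1 : ℝ))) := by
    intro n
    exact (measurable_from_top (f := fun z : ℤ => F ((z : ℝ) / (n+1 : ℝ)))).comp
      (Int.measurable_ceil.comp (measurable_id.mul_const _))
  apply measurable_of_tendsto_metrizable hg
  rw [tendsto_pi_nhds]
  intro x
  have hpos : ∀ n : ℕ, (0:ℝ) < n + 1 := fun n => by positivity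
  set c : ℕ → ℝ := fun n => (⌈x * (n+1 : ℝ)⌉ : ℤ) / (n+1 : ℝ) with hc
  have hxc : ∀ n, x ≤ c n := by
    intro n
    rw [hc, le_div_iff₀ (hpos n)]
    exact Int.le_ceil _
  have hcu : ∀ n, c n ≤ x + 1 / (n+1 : ℝ) := by
    intro n
    rw [hc, div_le_iff₀ (hpos n)]
    calc ((⌈x * (n+1 : ℝ)⌉ : ℤ) : ℝ) ≤ x * (n+1 : ℝ) + 1 := le_of_lt (Int.ceil_lt_add_one _)
    _ ≤ (x + 1 / (n+1 : ℝ)) * (n+1 : ℝ) := by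
        field_simp; exact le_refl _
  have hct : Tendsto c atTop (𝓝 x) := by
    have h1 : Tendsto (fun n : ℕ => x + 1 / (n+1 : ℝ)) atTop (𝓝 x) := by
      have := tendsto_one_div_add_atTop_nhds_zero_nat (𝕜 := ℝ)
      simpa using (tendsto_const_nhds (x := x)).add this
    exact tendsto_of_tendsto_of_tendsto_of_le_of_le tendsto_const_nhds h1 hxc hcu
  exact (h x).tendsto.comp
    (tendsto_nhdsWithin_of_tendsto_nhds_of_eventually_within _ hct
      (Eventually.of_forall hxc))

lemma aux_countable_of_isolated {s : Set ℝ} (h : ∀ x ∈ s, 𝓝[s \ {x}] x = ⊥) :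
    s.Countable := by
  have hd : DiscreteTopology s := by
    rw [discreteTopology_subtype_iff]
    intro x hx
    have h2 := h x hx
    rw [nhdsWithin, diff_eq, inter_comm, ← inf_principal, ← inf_assoc] at h2
    exact h2
  rw [← Set.countable_coe_iff]
  exact TopologicalSpace.separableSpace_iff_countable.mp inferInstance

/-- for an RCLL real-valued function `f`, the averaged
approximations `f̄_k(t) = k∫_{(t-1/k)⁺}^t f + k(1/k - t)⁺ f(0)` converge to
the left limit `f(t-)` for every `t > 0`, agree with `f(0)` at `0`, and hence
converge to `f(t)` for all but countably many `t ≥ 0`. -/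
theorem stmt_5 (f : ℝ → ℝ)
    (hrc : ∀ t : ℝ, 0 ≤ t → ContinuousWithinAt f (Ici t) t)
    (hll : ∀ t : ℝ, 0 < t → ∃ L, Tendsto f (nhdsWithin t (Iio t)) (nhds L))
    (fbar : ℕ → ℝ → ℝ)
    (hfbar : ∀ (k : ℕ) (t : ℝ), fbar k t =
      (k : ℝ) * (∫ s in (max (t - 1 / (k : ℝ)) 0)..t, f s) +
        (k : ℝ) * max (1 / (k : ℝ) - t) 0 * f 0) :
    (∀ t : ℝ, 0 < t →
      Tendsto (fun k : ℕ => fbar k t) atTop (nhds (Function.leftLim f t))) ∧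
    (∀ k : ℕ, 1 ≤ k → fbar k 0 = f 0) ∧
    Set.Countable {t : ℝ | 0 ≤ t ∧
      ¬ Tendsto (fun k : ℕ => fbar k t) atTop (nhds (f t))} := by
  -- the modified function F, right continuous everywhere and agreeing with f on [0,∞)
  set F : ℝ → ℝ := fun x => f (max x 0) with hF
  have hFeq : ∀ x : ℝ, 0 ≤ x → F x = f x := fun x hx => by rw [hF]; simp [max_eq_left hx]
  have hFrc : ∀ x : ℝ, ContinuousWithinAt F (Ici x) x := by
    intro x
    rcases le_or_gt 0 x with hx | hx
    · exact (hrc x hx).congr (fun y hy => hFeq y (le_trans hx hy)) (hFeq x hx)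
    · apply continuousWithinAt_const.congr_of_eventuallyEq (f := fun _ : ℝ => f 0)
      · filter_upwards [mem_nhdsWithin_of_mem_nhds (Iio_mem_nhds hx)] with y hy
        rw [hF]; simp [max_eq_right (le_of_lt (mem_Iio.mp hy))]
      · rw [hF]; simp [max_eq_right (le_of_lt hx)]
  have hFm : Measurable F := aux_measurable_of_rcll F hFrc
  -- Part 1
  have key : ∀ t : ℝ, 0 < t →
      Tendsto (fun k : ℕ => fbar k t) atTop (𝓝 (Function.leftLim f t)) := by
    intro t ht
    obtain ⟨L, hL⟩ := hll t ht
    have hlim : Function.leftLim f t = L :=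
      leftLim_eq_of_tendsto hL
    rw [hlim, Metric.tendsto_atTop]
    intro ε hε
    obtain ⟨δ, hδ0, hδ⟩ := Metric.tendsto_nhdsWithin_nhds.mp hL (ε/2) (by positivity)
    obtain ⟨N, hN⟩ := exists_nat_gt (max (1/δ) (1/t))
    refine ⟨max N 1, fun k hk => ?_⟩
    have hk1 : 1 ≤ k := le_trans (le_max_right N 1) hk
    have hkpos : (0:ℝ) < k := by exact_mod_cast hk1
    have hkN : (N:ℝ) ≤ k := by exact_mod_cast le_trans (le_max_left N 1) hk
    have h1δ : 1/(k:ℝ) < δ := by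
      have h2 : 1/δ < (k:ℝ) := lt_of_le_of_lt (le_max_left _ _) (lt_of_lt_of_le hN hkN)
      calc 1/(k:ℝ) < 1/(1/δ) := one_div_lt_one_div_of_lt (by positivity) h2
      _ = δ := one_div_one_div δ
    have h1t : 1/(k:ℝ) < t := by
      have h2 : 1/t < (k:ℝ) := lt_of_le_of_lt (le_max_right _ _) (lt_of_lt_of_le hN hkN)
      calc 1/(k:ℝ) < 1/(1/t) := one_div_lt_one_div_of_lt (by positivity) h2
      _ = t := one_div_one_div t
    have hkinv : (0:ℝ) < 1/(k:ℝ) := by positivity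
    have hmax1 : max (t - 1/(k:ℝ)) 0 = t - 1/(k:ℝ) := max_eq_left (by linarith)
    have hmax2 : max (1/(k:ℝ) - t) 0 = 0 := max_eq_right (by linarith)
    rw [hfbar, hmax1, hmax2]
    set a : ℝ := t - 1/(k:ℝ) with ha
    have ha0 : 0 < a := by rw [ha]; linarith
    have hat : a < t := by rw [ha]; linarith
    have hbd : ∀ s : ℝ, a ≤ s → s < t → |F s - L| < ε/2 := by
      intro s hs1 hs2
      rw [hFeq s (by linarith)]
      have := hδ (mem_Iio.mpr hs2)
        (by rw [Real.dist_eq, abs_of_neg (by linarith)]; rw [ha] at hs1; linarith)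
      rwa [Real.dist_eq] at this
    have hFi : IntervalIntegrable (fun s => F s - L) volume a t := by
      rw [intervalIntegrable_iff_integrableOn_Ioc_of_le (le_of_lt hat)]
      apply Measure.integrableOn_of_bounded (M := max (ε/2) |F t - L|) measure_Ioc_lt_top.ne
        ((hFm.sub measurable_const).aestronglyMeasurable)
      filter_upwards [ae_restrict_mem measurableSet_Ioc] with s hs
      rw [Real.norm_eq_abs]
      rcases lt_or_eq_of_le hs.2 with h | h
      · exact le_max_of_le_left (le_of_lt (hbd s (le_of_lt hs.1) h))
      · rw [h]; exact le_max_right _ _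
    have hFint : IntervalIntegrable F volume a t := by
      have := hFi.add (intervalIntegrable_const (c := L))
      simpa using this
    have hcongr : (∫ s in a..t, f s) = ∫ s in a..t, F s := by
      apply intervalIntegral.integral_congr
      intro s hs
      rw [uIcc_of_le (le_of_lt hat)] at hs
      exact (hFeq s (by linarith [hs.1])).symm
    have hae : ∀ᵐ x : ℝ, x ≠ t := by
      rw [ae_iff]
      have h3 : {x : ℝ | ¬ x ≠ t} = {t} := by ext y; simp
      rw [h3]; exact measure_singleton t
    have hnorm : ‖∫ s in a..t, (F s - L)‖ ≤ (ε/2) * |t - a| := by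
      apply intervalIntegral.norm_integral_le_of_norm_le_const_ae
      filter_upwards [hae] with s hs hmem
      rw [uIoc_of_le (le_of_lt hat)] at hmem
      rw [Real.norm_eq_abs]
      exact le_of_lt (hbd s (le_of_lt hmem.1) (lt_of_le_of_ne hmem.2 hs))
    rw [hcongr, Real.dist_eq]
    have hk0 : (k:ℝ) ≠ 0 := ne_of_gt hkpos
    have hrw : (k:ℝ) * (∫ s in a..t, F s) + (k:ℝ) * 0 * f 0 - L
        = (k:ℝ) * ∫ s in a..t, (F s - L) := by
      rw [intervalIntegral.integral_sub hFint intervalIntegrable_const,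
        intervalIntegral.integral_const, smul_eq_mul]
      have : t - a = 1/(k:ℝ) := by rw [ha]; ring
      rw [this]
      field_simp
      ring
    have hta : |t - a| = 1/(k:ℝ) := by
      rw [ha, abs_of_pos (by linarith)]; ring
    have habs : |(k:ℝ) * ∫ s in a..t, (F s - L)| = (k:ℝ) * |∫ s in a..t, (F s - L)| := by
      rw [abs_mul, abs_of_pos hkpos]
    rw [hrw, habs]
    have h6 : |∫ s in a..t, (F s - L)| ≤ (ε/2) * |t - a| := by
      rwa [Real.norm_eq_abs] at hnorm
    have h7 : (k:ℝ) * |∫ s in a..t, (F s - L)| ≤ (k:ℝ) * ((ε/2) * (1/(k:ℝ))) := by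
      rw [← hta]; exact mul_le_mul_of_nonneg_left h6 hkpos.le
    have h8 : (k:ℝ) * ((ε/2) * (1/(k:ℝ))) = ε/2 := by field_simp
    linarith
  -- Part 2
  have part2 : ∀ k : ℕ, 1 ≤ k → fbar k 0 = f 0 := by
    intro k hk
    have hkpos : (0:ℝ) < k := by exact_mod_cast hk
    have h1 : max ((0:ℝ) - 1/(k:ℝ)) 0 = 0 := by
      apply max_eq_right; rw [zero_sub]; exact neg_nonpos.mpr (by positivity)
    have h2 : max (1/(k:ℝ) - 0) 0 = 1/(k:ℝ) := by
      rw [sub_zero]; exact max_eq_left (by positivity)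
    rw [hfbar, h1, h2, intervalIntegral.integral_same, mul_zero, zero_add,
      mul_one_div_cancel (ne_of_gt hkpos), one_mul]
  refine ⟨key, part2, ?_⟩
  -- Part 3
  have hsub : {t : ℝ | 0 ≤ t ∧ ¬ Tendsto (fun k : ℕ => fbar k t) atTop (𝓝 (f t))}
      ⊆ ⋃ n : ℕ, {t : ℝ | 0 < t ∧ 1/(n+1:ℝ) < |Function.leftLim f t - f t|} := by
    rintro t ⟨ht0, htn⟩
    have htpos : 0 < t := by
      rcases lt_or_eq_of_le ht0 with h | h
      · exact h
      · exfalso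
        apply htn
        rw [← h]
        apply Tendsto.congr' _ (tendsto_const_nhds (x := f 0))
        filter_upwards [eventually_ge_atTop 1] with k hk
        exact (part2 k hk).symm
    have hne : Function.leftLim f t ≠ f t := fun heq => htn (heq ▸ key t htpos)
    obtain ⟨n, hn⟩ := exists_nat_one_div_lt (abs_pos.mpr (sub_ne_zero.mpr hne))
    exact mem_iUnion.mpr ⟨n, htpos, hn⟩
  apply Set.Countable.mono hsub
  apply Set.countable_iUnion
  intro n
  set c : ℝ := 1/(n+1:ℝ) with hcdef
  have hcpos : 0 < c := by positivity
  apply aux_countable_of_isolated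
  rintro t ⟨htpos, htc⟩
  obtain ⟨Lt, hLt⟩ := hll t htpos
  obtain ⟨δ₂, hδ₂0, hδ₂⟩ := Metric.tendsto_nhdsWithin_nhds.mp hLt (c/4) (by positivity)
  obtain ⟨δ₁, hδ₁0, hδ₁⟩ :=
    Metric.tendsto_nhdsWithin_nhds.mp (hrc t htpos.le).tendsto (c/4) (by positivity)
  rw [nhdsWithin, inf_principal_eq_bot]
  filter_upwards [Ioo_mem_nhds (show t - δ₂ < t by linarith) (show t < t + δ₁ by linarith)]
    with s hs
  rintro ⟨⟨hspos, hsc⟩, hsne⟩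
  have hsne' : s ≠ t := fun h => hsne (by simp [h])
  obtain ⟨Ls, hLs⟩ := hll s hspos
  have hLseq : Function.leftLim f s = Ls :=
    leftLim_eq_of_tendsto hLs
  rw [hLseq] at hsc
  rcases lt_or_gt_of_ne hsne' with hlt | hgt
  · -- s < t
    have hfs : |f s - Lt| < c/4 := by
      have := hδ₂ (mem_Iio.mpr hlt)
        (by rw [Real.dist_eq, abs_of_neg (by linarith)]; linarith [hs.1])
      rwa [Real.dist_eq] at this
    have hLsb : |Ls - Lt| ≤ c/4 := by
      apply le_of_tendsto ((hLs.sub_const Lt).abs)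
      filter_upwards [Ioo_mem_nhdsLT_of_mem (show s ∈ Ioc (t-δ₂) s from ⟨hs.1, le_refl s⟩)]
        with u hu
      have := hδ₂ (mem_Iio.mpr (lt_trans hu.2 hlt))
        (by rw [Real.dist_eq, abs_of_neg (by linarith [hu.2])]; linarith [hu.1])
      rw [Real.dist_eq] at this; exact this.le
    have hfinal : |Ls - f s| ≤ c/2 := by
      calc |Ls - f s| ≤ |Ls - Lt| + |Lt - f s| := abs_sub_le _ _ _
      _ ≤ c/4 + c/4 := add_le_add hLsb (by rw [abs_sub_comm]; exact hfs.le)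
      _ = c/2 := by ring
    linarith
  · -- s > t
    have hfs : |f s - f t| < c/4 := by
      have := hδ₁ (mem_Ici.mpr hgt.le)
        (by rw [Real.dist_eq, abs_of_pos (by linarith)]; linarith [hs.2])
      rwa [Real.dist_eq] at this
    have hLsb : |Ls - f t| ≤ c/4 := by
      apply le_of_tendsto ((hLs.sub_const (f t)).abs)
      filter_upwards [Ioo_mem_nhdsLT_of_mem (show s ∈ Ioc t s from ⟨hgt, le_refl s⟩)]
        with u hu
      have := hδ₁ (mem_Ici.mpr hu.1.le)
        (by rw [Real.dist_eq, abs_of_pos (by linarith [hu.1])]; linarith [hu.2, hs.2])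
      rw [Real.dist_eq] at this; exact this.le
    have hfinal : |Ls - f s| ≤ c/2 := by
      calc |Ls - f s| ≤ |Ls - f t| + |f t - f s| := abs_sub_le _ _ _
      _ ≤ c/4 + c/4 := add_le_add hLsb (by rw [abs_sub_comm]; exact hfs.le)
      _ = c/2 := by ring
    linarith
end

section
/- Let a : [0,∞) → [0,∞) be right-continuous and nondecreasing with a(0) = 0, and let c(t) = inf{s ≥ 0 : a(s) > t} be its right inverse, assumed finite for all t. Then for every nonnegative Borel function f on [0,∞), ∫_{[0,∞)} f(s) da(s) = ∫_{[0,∞)} f(c(s)) ds, where the left integral is the Lebesgue–Stieltjes integral with respect to a. -/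
open Set Filter MeasureTheory

/-- change-of-variables formula `∫_{[0,∞)} f(s) da(s) =
∫_{[0,∞)} f(c(s)) ds` for a right-continuous nondecreasing `a` with
`a(0) = 0` (extended by `0` on the negative half-line) and right inverse
`c(t) = inf{s ≥ 0 : a(s) > t}`, assumed finite for all `t ≥ 0`. -/
theorem stmt_6 (A : StieltjesFunction ℝ)
    (hAneg : ∀ t : ℝ, t ≤ 0 → A t = 0)
    (c : ℝ → ℝ) (hc : ∀ t, c t = sInf {s : ℝ | 0 ≤ s ∧ t < A s})
    (hfin : ∀ t : ℝ, 0 ≤ t → ∃ s, 0 ≤ s ∧ t < A s)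
    (f : ℝ → ENNReal) (hf : Measurable f) :
    ∫⁻ s in Ici (0 : ℝ), f s ∂A.measure = ∫⁻ s in Ici (0 : ℝ), f (c s) := by
  have hA0 : A 0 = 0 := hAneg 0 le_rfl
  have hbdd : ∀ t : ℝ, BddBelow {s : ℝ | 0 ≤ s ∧ t < A s} := fun t => ⟨0, fun s hs => hs.1⟩
  have hne : ∀ t : ℝ, {s : ℝ | 0 ≤ s ∧ t < A s}.Nonempty := by
    intro t
    rcases le_or_gt 0 t with h | h
    · exact hfin t h
    · exact ⟨0, le_rfl, by rw [hA0]; exact h⟩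
  have hc0 : ∀ t, 0 ≤ c t := fun t => by
    rw [hc]; exact le_csInf (hne t) fun s hs => hs.1
  have hmono : Monotone c := by
    intro t₁ t₂ h
    rw [hc, hc]
    exact csInf_le_csInf (hbdd t₁) (hne t₂) fun s hs => ⟨hs.1, lt_of_le_of_lt h hs.2⟩
  have hcm : Measurable c := hmono.measurable
  have hkey1 : ∀ t x : ℝ, 0 ≤ x → t < A x → c t ≤ x := by
    intro t x hx ht
    rw [hc]; exact csInf_le (hbdd t) ⟨hx, ht⟩
  have hkey2 : ∀ t x : ℝ, c t ≤ x → t ≤ A x := by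
    intro t x hcx
    by_contra h
    push_neg at h
    obtain ⟨y, hyt, hyx⟩ : ∃ y : ℝ, A y < t ∧ y ∈ Ioi x := by
      have hev : ∀ᶠ y in nhdsWithin x (Ioi x), A y < t :=
        (((A.right_continuous x).tendsto.eventually_lt_const h).filter_mono
          (nhdsWithin_mono _ Ioi_subset_Ici_self))
      exact (hev.and (eventually_mem_nhdsWithin)).exists
    have hyc : y ≤ c t := by
      rw [hc]
      refine le_csInf (hne t) fun s hs => ?_
      by_contra hsy
      push_neg at hsy
      exact absurd (A.mono hsy.le) (not_le.2 (hyt.trans hs.2))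
    exact absurd (hcx.trans_lt hyx) (not_lt.2 hyc)
  -- Iic values of the mapped measure
  have hμIic : ∀ x : ℝ,
      (Measure.map c (volume.restrict (Ici 0))) (Iic x) = ENNReal.ofReal (A x) := by
    intro x
    rw [Measure.map_apply hcm measurableSet_Iic,
      Measure.restrict_apply (hcm measurableSet_Iic)]
    rcases lt_or_ge x 0 with hx | hx
    · have : c ⁻¹' Iic x ∩ Ici 0 = ∅ := by
        ext t
        simp only [mem_inter_iff, mem_preimage, mem_Iic, mem_Ici, mem_empty_iff_false,
          iff_false, not_and]
        intro h1 _
        exact absurd (h1.trans_lt hx) (not_lt.2 (hc0 t))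
      rw [this, measure_empty, hAneg x hx.le, ENNReal.ofReal_zero]
    · apply le_antisymm
      · calc volume (c ⁻¹' Iic x ∩ Ici 0) ≤ volume (Icc 0 (A x)) := by
              refine measure_mono fun t ht => ⟨ht.2, hkey2 t x ht.1⟩
          _ = ENNReal.ofReal (A x) := by rw [Real.volume_Icc, sub_zero]
      · calc ENNReal.ofReal (A x) = volume (Ico 0 (A x)) := by
              rw [Real.volume_Ico, sub_zero]
          _ ≤ volume (c ⁻¹' Iic x ∩ Ici 0) := by
              refine measure_mono fun t ht => ⟨hkey1 t x hx ht.2, ht.1⟩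
  -- Iic values of the restricted Stieltjes measure
  have hνIic : ∀ x : ℝ, (A.measure.restrict (Ici 0)) (Iic x) = ENNReal.ofReal (A x) := by
    intro x
    rw [Measure.restrict_apply measurableSet_Iic]
    rcases lt_or_ge x 0 with hx | hx
    · have : Iic x ∩ Ici 0 = ∅ := by
        ext t
        simp only [mem_inter_iff, mem_Iic, mem_Ici, mem_empty_iff_false, iff_false, not_and]
        intro h1 h2
        exact absurd (h2.trans h1) (not_le.2 hx)
      rw [this, measure_empty, hAneg x hx.le, ENNReal.ofReal_zero]
    · apply le_antisymm
      · calc A.measure (Iic x ∩ Ici 0) ≤ A.measure (Ioc (-1) x) := by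
              refine measure_mono fun t ht => ⟨by linarith [mem_Ici.mp ht.2], ht.1⟩
          _ = ENNReal.ofReal (A x - A (-1)) := A.measure_Ioc _ _
          _ = ENNReal.ofReal (A x) := by rw [hAneg (-1) (by norm_num), sub_zero]
      · calc ENNReal.ofReal (A x) = ENNReal.ofReal (A x - A 0) := by rw [hA0, sub_zero]
          _ = A.measure (Ioc 0 x) := (A.measure_Ioc 0 x).symm
          _ ≤ A.measure (Iic x ∩ Ici 0) := by
              refine measure_mono fun t ht => ⟨ht.2, ht.1.le⟩
  have hIoc : ∀ (μ : Measure ℝ), (∀ x, μ (Iic x) = ENNReal.ofReal (A x)) →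
      ∀ a b : ℝ, a ≤ b → μ (Ioc a b) = ENNReal.ofReal (A b) - ENNReal.ofReal (A a) := by
    intro μ hμ a b hab
    rw [← Iic_sdiff_Iic, measure_diff (Iic_subset_Iic.2 hab) nullMeasurableSet_Iic
      (by rw [hμ]; exact ENNReal.ofReal_ne_top), hμ, hμ]
  have hmeas : A.measure.restrict (Ici 0) = Measure.map c (volume.restrict (Ici 0)) := by
    refine Measure.ext_of_Ioc' _ _ (fun a b hab => ?_) (fun a b hab => ?_)
    · rw [hIoc _ hνIic a b hab.le]
      exact (tsub_le_self.trans_lt ENNReal.ofReal_lt_top).ne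
    · rw [hIoc _ hνIic a b hab.le, hIoc _ hμIic a b hab.le]
  calc ∫⁻ s in Ici (0 : ℝ), f s ∂A.measure
      = ∫⁻ s, f s ∂(Measure.map c (volume.restrict (Ici 0))) := by rw [← hmeas]
    _ = ∫⁻ s in Ici (0 : ℝ), f (c s) := lintegral_map hf hcm
end

section
/- Let a : [0,∞) → [0,∞) be right-continuous and nondecreasing with a(0) = 0, let c be its right inverse c(t) = inf{s ≥ 0 : a(s) > t}, assumed finite for all t ≥ 0, let f be a nonnegative Borel function on [0,∞), and let F : [0,∞) → [0,∞) be right-continuous and nondecreasing. Then ∫_{[0,∞)} f(s) dF(a(s)) = ∫_{[0,∞)} f(c(s-)) dF(s), with the convention that the contribution at 0 is f(0)F(0). -/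
open Set Filter MeasureTheory
open Topology

/-- change-of-variables formula
`∫_{[0,∞)} f(s) dF(a(s)) = ∫_{[0,∞)} f(c(s-)) dF(s)` where `a` is
right-continuous nondecreasing with `a(0) = 0` (extended by `0` on the
negative half-line), `c` is its right inverse (finite everywhere), `f ≥ 0` is
Borel, and `F` is right-continuous nondecreasing (with `F = 0` on `(-∞,0)`,
encoding the convention that the contribution at `0` is `f(0)F(0)`). -/
theorem stmt_7 (A F FA : StieltjesFunction ℝ)
    (hAneg : ∀ t : ℝ, t ≤ 0 → A t = 0)
    (hFneg : ∀ t : ℝ, t < 0 → F t = 0)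
    (hFA : ∀ t : ℝ, FA t = if 0 ≤ t then F (A t) else 0)
    (c : ℝ → ℝ) (hc : ∀ t, c t = sInf {s : ℝ | 0 ≤ s ∧ t < A s})
    (hfin : ∀ t : ℝ, 0 ≤ t → ∃ s, 0 ≤ s ∧ t < A s)
    (f : ℝ → ENNReal) (hf : Measurable f) :
    ∫⁻ s in Ici (0 : ℝ), f s ∂FA.measure
      = ∫⁻ s in Ici (0 : ℝ), f (Function.leftLim c s) ∂F.measure := by
  have hA0 : A 0 = 0 := hAneg 0 le_rfl
  -- the sets defining c are nonempty and bounded below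
  have hSne : ∀ t : ℝ, {s : ℝ | 0 ≤ s ∧ t < A s}.Nonempty := by
    intro t
    rcases le_or_gt 0 t with ht | ht
    · exact hfin t ht
    · rcases hfin 0 le_rfl with ⟨s, hs0, hAs⟩
      exact ⟨s, hs0, ht.trans hAs⟩
  have hSbdd : ∀ t : ℝ, BddBelow {s : ℝ | 0 ≤ s ∧ t < A s} :=
    fun t => ⟨0, fun s hs => hs.1⟩
  have hcnonneg : ∀ t, 0 ≤ c t := by
    intro t; rw [hc]
    exact le_csInf (hSne t) fun s hs => hs.1
  have hcmono : Monotone c := by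
    intro u v huv
    rw [hc, hc]
    exact csInf_le_csInf (hSbdd u) (hSne v) fun s hs => ⟨hs.1, huv.trans_lt hs.2⟩
  set g := Function.leftLim c with hg
  have hgmono : Monotone g := hcmono.leftLim
  have hgmeas : Measurable g := hgmono.measurable
  have hgnonneg : ∀ t, 0 ≤ g t := by
    intro t
    have := hcmono.tendsto_leftLim t
    exact ge_of_tendsto this (Eventually.of_forall fun u => hcnonneg u)
  -- key equivalence: g t ≤ b ↔ t ≤ A b, for b ≥ 0
  have hkey : ∀ t b : ℝ, 0 ≤ b → (g t ≤ b ↔ t ≤ A b) := by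
    intro t b hb
    constructor
    · intro h
      by_contra hlt
      push_neg at hlt
      obtain ⟨u, hu1, hu2⟩ := exists_between hlt
      have hAb : (0:ℝ) ≤ A b := by rw [← hA0]; exact A.mono hb
      have hu0 : 0 ≤ u := le_of_lt (lt_of_le_of_lt hAb hu1)
      have hcu : c u ≤ b := le_trans (hcmono.le_leftLim hu2) h
      -- every b' > b satisfies u < A b'
      have hforall : ∀ b' : ℝ, b < b' → u ≤ A b' := by
        intro b' hb'
        have : sInf {s : ℝ | 0 ≤ s ∧ u < A s} < b' := by
          rw [← hc]; exact lt_of_le_of_lt hcu hb'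
        rw [csInf_lt_iff (hSbdd u) (hSne u)] at this
        obtain ⟨s, hs, hsb'⟩ := this
        exact le_of_lt (lt_of_lt_of_le hs.2 (A.mono hsb'.le))
      have : u ≤ A b := by
        have htend : Tendsto A (nhdsWithin b (Ioi b)) (nhds (A b)) :=
          (A.right_continuous b).tendsto.mono_left
            (nhdsWithin_mono b Ioi_subset_Ici_self)
        refine ge_of_tendsto htend ?_
        filter_upwards [self_mem_nhdsWithin] with x hx using hforall x hx
      exact absurd this (not_le.mpr hu1)
    · intro h
      have htend := hcmono.tendsto_leftLim t
      refine le_of_tendsto htend ?_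
      filter_upwards [self_mem_nhdsWithin] with u hu
      rw [hc]
      refine csInf_le (hSbdd u) ⟨hb, lt_of_lt_of_le hu h⟩
  -- left limits of F and FA at 0 vanish
  have hFll : Function.leftLim F 0 = 0 := by
    have h1 : Tendsto F (𝓝[<] (0:ℝ)) (𝓝 (Function.leftLim F 0)) := F.mono.tendsto_leftLim 0
    have h2 : Tendsto F (𝓝[<] (0:ℝ)) (𝓝 0) := by
      refine Tendsto.congr' ?_ tendsto_const_nhds
      filter_upwards [self_mem_nhdsWithin] with x hx using (hFneg x hx).symm
    exact tendsto_nhds_unique h1 h2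
  have hFAll : Function.leftLim FA 0 = 0 := by
    have h1 : Tendsto FA (𝓝[<] (0:ℝ)) (𝓝 (Function.leftLim FA 0)) := FA.mono.tendsto_leftLim 0
    have h2 : Tendsto FA (𝓝[<] (0:ℝ)) (𝓝 0) := by
      refine Tendsto.congr' ?_ tendsto_const_nhds
      filter_upwards [self_mem_nhdsWithin] with x hx
      rw [hFA x, if_neg (not_le.mpr hx)]
    exact tendsto_nhds_unique h1 h2
  -- the main measure identity
  have hmeas : FA.measure.restrict (Ici 0)
      = Measure.map g (F.measure.restrict (Ici 0)) := by
    refine Measure.ext_of_Ioc' _ _ (fun a b hab => ?_) (fun a b hab => ?_)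
    · rw [Measure.restrict_apply measurableSet_Ioc]
      exact ((measure_mono Set.inter_subset_left).trans_lt
        (by rw [FA.measure_Ioc]; exact ENNReal.ofReal_lt_top)).ne
    · rw [Measure.restrict_apply measurableSet_Ioc,
        Measure.map_apply hgmeas measurableSet_Ioc,
        Measure.restrict_apply (hgmeas measurableSet_Ioc)]
      rcases lt_or_ge b 0 with hb | hb
      · -- b < 0 : both sides vanish
        have h1 : Ioc a b ∩ Ici (0:ℝ) = ∅ := by
          ext x; simp only [mem_inter_iff, mem_Ioc, mem_Ici, mem_empty_iff_false, iff_false]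
          rintro ⟨⟨_, hx⟩, hx0⟩; exact absurd (hx.trans_lt hb) (not_lt.mpr hx0)
        have h2 : g ⁻¹' Ioc a b ∩ Ici (0:ℝ) = ∅ := by
          ext x; simp only [mem_inter_iff, mem_preimage, mem_Ioc, mem_Ici,
            mem_empty_iff_false, iff_false]
          rintro ⟨⟨_, hx⟩, _⟩
          exact absurd ((hgnonneg x).trans hx) (not_le.mpr hb)
        rw [h1, h2, measure_empty, measure_empty]
      rcases lt_or_ge a 0 with ha | ha
      · -- a < 0 ≤ b
        have h1 : Ioc a b ∩ Ici (0:ℝ) = Icc 0 b := by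
          ext x; simp only [mem_inter_iff, mem_Ioc, mem_Ici, mem_Icc]
          constructor
          · rintro ⟨⟨_, hx⟩, hx0⟩; exact ⟨hx0, hx⟩
          · rintro ⟨hx0, hx⟩; exact ⟨⟨ha.trans_le hx0, hx⟩, hx0⟩
        have h2 : g ⁻¹' Ioc a b ∩ Ici (0:ℝ) = Icc 0 (A b) := by
          ext x; simp only [mem_preimage, mem_inter_iff, mem_Ioc, mem_Ici, mem_Icc]
          constructor
          · rintro ⟨⟨_, hx⟩, hx0⟩
            exact ⟨hx0, (hkey x b hb).mp hx⟩
          · rintro ⟨hx0, hx⟩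
            refine ⟨⟨ha.trans_le (hgnonneg x), (hkey x b hb).mpr hx⟩, hx0⟩
        rw [h1, h2, FA.measure_Icc, F.measure_Icc, hFAll, hFll, hFA b, if_pos hb]
      · -- 0 ≤ a < b
        have h1 : Ioc a b ∩ Ici (0:ℝ) = Ioc a b :=
          inter_eq_left.mpr fun x hx => le_trans ha (le_of_lt hx.1)
        have h2 : g ⁻¹' Ioc a b ∩ Ici (0:ℝ) = Ioc (A a) (A b) := by
          ext x; simp only [mem_preimage, mem_inter_iff, mem_Ioc, mem_Ici]
          constructor
          · rintro ⟨⟨hxa, hxb⟩, hx0⟩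
            refine ⟨?_, (hkey x b hb).mp hxb⟩
            by_contra hle
            push_neg at hle
            exact absurd ((hkey x a ha).mpr hle) (not_le.mpr hxa)
          · rintro ⟨hxa, hxb⟩
            have hAa : (0:ℝ) ≤ A a := by rw [← hA0]; exact A.mono ha
            have hx0 : 0 ≤ x := le_of_lt (lt_of_le_of_lt hAa hxa)
            refine ⟨⟨?_, (hkey x b hb).mpr hxb⟩, hx0⟩
            by_contra hle
            push_neg at hle
            exact absurd ((hkey x a ha).mp hle) (not_le.mpr hxa)
        rw [h1, h2, FA.measure_Ioc, F.measure_Ioc, hFA a, if_pos ha, hFA b, if_pos hb]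
  calc ∫⁻ s in Ici (0 : ℝ), f s ∂FA.measure
      = ∫⁻ s, f s ∂(Measure.map g (F.measure.restrict (Ici 0))) := by rw [← hmeas]
    _ = ∫⁻ s in Ici (0 : ℝ), f (g s) ∂F.measure := by
        rw [lintegral_map hf hgmeas]
end

section
/- Suppose (X_n)_{n≥1} is a sequence of ℝ^p-valued random variables with sup_n E|X_n|^α < ∞ for some α > 0, and (τ̂_n)_{n≥1} are random nondecreasing continuous functions on [0,∞) such that for each t > M, {τ̂_n(t) < M} ⊆ {|X_n| > t - M}. If τ̂_n converges weakly (in C([0,∞))) to a process τ̂ with nondecreasing paths, then P[lim_{t→∞} τ̂(t) < M] = 0 for every M > 0; in particular τ̂(t) → ∞ as t → ∞ almost surely. -/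
open Set Filter MeasureTheory Topology

/-- if `sup_n E|X_n|^α < ∞`, the nondecreasing continuous time
changes `τ̂_n` satisfy `{τ̂_n(t) < M} ⊆ {|X_n| > t - M}` for `t > M`, and
`τ̂_n ⇒ τ̂` weakly in `C([0,∞))` (tested against bounded continuous
functionals for the topology of uniform convergence on compacts), then
`P[lim_{t→∞} τ̂(t) < M] = 0` for every `M > 0`; in particular
`τ̂(t) → ∞` as `t → ∞` almost surely. -/
theorem stmt_10 {p : ℕ} {Ω : Type*} [MeasurableSpace Ω]
    (P : Measure Ω) [IsProbabilityMeasure P]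
    (X : ℕ → Ω → EuclideanSpace ℝ (Fin p))
    (hXmeas : ∀ n, Measurable (X n))
    (α : ℝ) (hα : 0 < α) (C : ENNReal) (hC : C ≠ ⊤)
    (hmom : ∀ n, ∫⁻ ω, ENNReal.ofReal (‖X n ω‖ ^ α) ∂P ≤ C)
    (τhatn : ℕ → Ω → C(ℝ, ℝ)) (τhat : Ω → C(ℝ, ℝ))
    (hτnmeas : ∀ n t, Measurable fun ω => τhatn n ω t)
    (hτmeas : ∀ t : ℝ, Measurable fun ω => τhat ω t)
    (hτnmono : ∀ n ω, MonotoneOn (τhatn n ω) (Ici 0))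
    (hτnnn : ∀ n ω t, 0 ≤ t → 0 ≤ τhatn n ω t)
    (hτmono : ∀ᵐ ω ∂P, MonotoneOn (τhat ω) (Ici 0))
    (hincl : ∀ (n : ℕ) (M t : ℝ), 0 < M → M < t →
      {ω | τhatn n ω t < M} ⊆ {ω | t - M < ‖X n ω‖})
    (hweak : ∀ G : BoundedContinuousFunction C(ℝ, ℝ) ℝ,
      Tendsto (fun n => ∫ ω, G (τhatn n ω) ∂P) atTop
        (nhds (∫ ω, G (τhat ω) ∂P))) :
    (∀ M : ℝ, 0 < M →
      P {ω | ∃ L, L < M ∧ ∀ t : ℝ, 0 ≤ t → τhat ω t ≤ L} = 0) ∧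
    (∀ᵐ ω ∂P, Tendsto (fun t : ℝ => τhat ω t) atTop atTop) := by
  -- Markov inequality
  have markov : ∀ (n : ℕ) (r : ℝ), 0 < r →
      P {ω | r < ‖X n ω‖} ≤ C / ENNReal.ofReal (r ^ α) := by
    intro n r hr
    have hmeasf : Measurable fun ω => ENNReal.ofReal (‖X n ω‖ ^ α) :=
      (((Real.continuous_rpow_const hα.le).measurable).comp
        (hXmeas n).norm).ennreal_ofReal
    calc P {ω | r < ‖X n ω‖}
        ≤ P {ω | ENNReal.ofReal (r ^ α) ≤ ENNReal.ofReal (‖X n ω‖ ^ α)} := by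
          refine measure_mono fun ω h => ?_
          exact ENNReal.ofReal_le_ofReal
            (Real.rpow_le_rpow hr.le (le_of_lt h) hα.le)
      _ ≤ (∫⁻ ω, ENNReal.ofReal (‖X n ω‖ ^ α) ∂P) / ENNReal.ofReal (r ^ α) :=
          meas_ge_le_lintegral_div hmeasf.aemeasurable
            (ne_of_gt (ENNReal.ofReal_pos.mpr (Real.rpow_pos_of_pos hr α)))
            ENNReal.ofReal_ne_top
      _ ≤ C / ENNReal.ofReal (r ^ α) := by
          exact ENNReal.div_le_div_right (hmom n) _
  -- key bound for fixed t
  have keyt : ∀ (M ε t : ℝ), 0 < M → 0 < ε → M < t →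
      P {ω | τhat ω t ≤ M - ε} ≤ C / ENNReal.ofReal ((t - M) ^ α) := by
    intro M ε t hM hε ht
    set gfun : ℝ → ℝ := fun x => min 1 (max 0 ((M - x) / ε)) with hgdef
    have hgcont : Continuous gfun :=
      continuous_const.min (continuous_const.max
        ((continuous_const.sub continuous_id).div_const ε))
    have hg0 : ∀ x, 0 ≤ gfun x := fun x => le_min zero_le_one (le_max_left _ _)
    have hg1 : ∀ x, gfun x ≤ 1 := fun x => min_le_left _ _
    have hgeq1 : ∀ x, x ≤ M - ε → gfun x = 1 := by
      intro x hx
      have h1 : (1 : ℝ) ≤ (M - x) / ε := (one_le_div hε).2 (by linarith)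
      exact min_eq_left (le_max_of_le_right h1)
    have hgeq0 : ∀ x, M ≤ x → gfun x = 0 := by
      intro x hx
      have h1 : (M - x) / ε ≤ 0 := div_nonpos_iff.2 (Or.inr ⟨by linarith, hε.le⟩)
      rw [hgdef]
      simp only [max_eq_left h1, min_eq_right zero_le_one]
    let gb : BoundedContinuousFunction ℝ ℝ :=
      BoundedContinuousFunction.mkOfBound ⟨gfun, hgcont⟩ 1 (by
        intro x y
        rw [Real.dist_eq, abs_sub_le_iff]
        constructor
        · have := hg0 y; have := hg1 x; simp only [ContinuousMap.coe_mk]; linarith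
        · have := hg0 x; have := hg1 y; simp only [ContinuousMap.coe_mk]; linarith)
    let ev : C(C(ℝ, ℝ), ℝ) := ⟨fun f => f t, continuous_eval_const t⟩
    let G := gb.compContinuous ev
    have hGeq : ∀ f : C(ℝ, ℝ), G f = gfun (f t) := fun f => rfl
    have hlim := hweak G
    set B : ℝ := (C / ENNReal.ofReal ((t - M) ^ α)).toReal with hBdef
    have hBfin : C / ENNReal.ofReal ((t - M) ^ α) ≠ ⊤ :=
      (ENNReal.div_lt_top hC
        (ne_of_gt (ENNReal.ofReal_pos.mpr
          (Real.rpow_pos_of_pos (by linarith) α)))).ne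
    have hint : ∀ h : Ω → ℝ, Measurable h → Integrable (fun ω => gfun (h ω)) P := by
      intro h hh
      refine (integrable_const (1 : ℝ)).mono'
        ((hgcont.measurable.comp hh).aestronglyMeasurable) ?_
      filter_upwards with ω
      rw [Real.norm_eq_abs, abs_le]
      exact ⟨by linarith [hg0 (h ω)], hg1 _⟩
    have hub : ∀ n, ∫ ω, G (τhatn n ω) ∂P ≤ B := by
      intro n
      have hmeasS : MeasurableSet {ω | τhatn n ω t < M} :=
        (hτnmeas n t) measurableSet_Iio
      have hle : ∀ ω, G (τhatn n ω) ≤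
          Set.indicator {ω | τhatn n ω t < M} (fun _ => (1 : ℝ)) ω := by
        intro ω
        rw [hGeq]
        by_cases hω : ω ∈ {ω | τhatn n ω t < M}
        · rw [Set.indicator_of_mem hω]; exact hg1 _
        · rw [Set.indicator_of_notMem hω,
            hgeq0 _ (not_lt.1 (fun h => hω h))]
      calc ∫ ω, G (τhatn n ω) ∂P
          ≤ ∫ ω, Set.indicator {ω | τhatn n ω t < M} (fun _ => (1 : ℝ)) ω ∂P := by
            refine integral_mono ?_ ((integrable_const (1:ℝ)).indicator hmeasS) hle
            simpa only [hGeq] using hint (fun ω => τhatn n ω t) (hτnmeas n t)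
        _ = (P {ω | τhatn n ω t < M}).toReal := by
            rw [integral_indicator_const _ hmeasS, smul_eq_mul, mul_one]; rfl
        _ ≤ (P {ω | t - M < ‖X n ω‖}).toReal :=
            ENNReal.toReal_mono (measure_ne_top P _)
              (measure_mono (hincl n M t hM ht))
        _ ≤ B := ENNReal.toReal_mono hBfin (markov n (t - M) (by linarith))
    have hτle : ∫ ω, G (τhat ω) ∂P ≤ B := le_of_tendsto' hlim hub
    have hmeasT : MeasurableSet {ω | τhat ω t ≤ M - ε} :=
      (hτmeas t) measurableSet_Iic
    have hlow : (P {ω | τhat ω t ≤ M - ε}).toReal ≤ ∫ ω, G (τhat ω) ∂P := by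
      have hge : ∀ ω, Set.indicator {ω | τhat ω t ≤ M - ε}
          (fun _ => (1 : ℝ)) ω ≤ G (τhat ω) := by
        intro ω
        rw [hGeq]
        by_cases hω : ω ∈ {ω | τhat ω t ≤ M - ε}
        · rw [Set.indicator_of_mem hω, hgeq1 _ hω]
        · rw [Set.indicator_of_notMem hω]; exact hg0 _
      calc (P {ω | τhat ω t ≤ M - ε}).toReal
          = ∫ ω, Set.indicator {ω | τhat ω t ≤ M - ε} (fun _ => (1:ℝ)) ω ∂P := by
            rw [integral_indicator_const _ hmeasT, smul_eq_mul, mul_one]; rfl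
        _ ≤ ∫ ω, G (τhat ω) ∂P := by
            refine integral_mono ((integrable_const (1:ℝ)).indicator hmeasT) ?_ hge
            simpa only [hGeq] using hint (fun ω => τhat ω t) (hτmeas t)
    exact (ENNReal.toReal_le_toReal (measure_ne_top P _) hBfin).mp
      (hlow.trans hτle)
  -- all-t event has measure 0
  have keyE : ∀ (M ε : ℝ), 0 < M → 0 < ε →
      P {ω | ∀ t : ℝ, 0 ≤ t → τhat ω t ≤ M - ε} = 0 := by
    intro M ε hM hε
    set E := {ω | ∀ t : ℝ, 0 ≤ t → τhat ω t ≤ M - ε} with hEdef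
    have hb : ∀ k : ℕ, P E ≤ C / ENNReal.ofReal (((k : ℝ) + 1) ^ α) := by
      intro k
      have ht : M < M + ((k : ℝ) + 1) := lt_add_of_pos_right M (by positivity)
      have h1 := keyt M ε (M + ((k : ℝ) + 1)) hM hε ht
      have h2 : E ⊆ {ω | τhat ω (M + ((k : ℝ) + 1)) ≤ M - ε} := by
        intro ω hω
        exact hω (M + ((k : ℝ) + 1)) (by positivity)
      calc P E ≤ P {ω | τhat ω (M + ((k : ℝ) + 1)) ≤ M - ε} := measure_mono h2
        _ ≤ C / ENNReal.ofReal ((M + ((k : ℝ) + 1) - M) ^ α) := h1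
        _ = C / ENNReal.ofReal (((k : ℝ) + 1) ^ α) := by ring_nf
    have htend : Tendsto (fun k : ℕ => C / ENNReal.ofReal (((k : ℝ) + 1) ^ α))
        atTop (nhds 0) := by
      have h1 : Tendsto (fun k : ℕ => ((k : ℝ) + 1)) atTop atTop :=
        tendsto_atTop_add_const_right _ 1 tendsto_natCast_atTop_atTop
      have h2 : Tendsto (fun k : ℕ => ((k : ℝ) + 1) ^ α) atTop atTop :=
        (tendsto_rpow_atTop hα).comp h1
      have h3 : Tendsto (fun k : ℕ => ENNReal.ofReal (((k : ℝ) + 1) ^ α))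
          atTop (nhds ⊤) := ENNReal.tendsto_ofReal_atTop.comp h2
      have h4 : Tendsto (fun k : ℕ => (ENNReal.ofReal (((k : ℝ) + 1) ^ α))⁻¹)
          atTop (nhds 0) := by
        simpa using ENNReal.tendsto_inv_iff.2 h3
      have h5 := ENNReal.Tendsto.const_mul h4 (Or.inr hC)
      simpa [div_eq_mul_inv] using h5
    have := ge_of_tendsto' htend hb
    exact le_antisymm (le_trans (le_of_eq rfl) this) zero_le
  have part1 : ∀ M : ℝ, 0 < M →
      P {ω | ∃ L, L < M ∧ ∀ t : ℝ, 0 ≤ t → τhat ω t ≤ L} = 0 := by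
    intro M hM
    have hsub : {ω | ∃ L, L < M ∧ ∀ t : ℝ, 0 ≤ t → τhat ω t ≤ L} ⊆
        ⋃ k : ℕ, {ω | ∀ t : ℝ, 0 ≤ t → τhat ω t ≤ M - 1 / ((k : ℝ) + 1)} := by
      rintro ω ⟨L, hLM, hL⟩
      obtain ⟨k, hk⟩ := exists_nat_one_div_lt (sub_pos.2 hLM)
      refine mem_iUnion.2 ⟨k, fun t ht => ?_⟩
      have := hL t ht
      linarith
    refine measure_mono_null hsub (measure_iUnion_null fun k => ?_)
    exact keyE M (1 / ((k : ℝ) + 1)) hM (by positivity)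
  refine ⟨part1, ?_⟩
  have hnull : ∀ k : ℕ, ∀ᵐ ω ∂P,
      ω ∉ {ω | ∃ L, L < ((k : ℝ) + 1) ∧ ∀ t : ℝ, 0 ≤ t → τhat ω t ≤ L} := by
    intro k
    have := part1 ((k : ℝ) + 1) (by positivity)
    exact measure_eq_zero_iff_ae_notMem.mp this
  filter_upwards [hτmono, ae_all_iff.2 hnull] with ω hmono hbad
  rw [tendsto_atTop]
  intro b
  obtain ⟨k, hk⟩ := exists_nat_ge b
  have hnb := hbad k
  push_neg at hnb
  obtain ⟨t, ht0, htb⟩ := hnb b (by push_cast; linarith)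
  filter_upwards [eventually_ge_atTop t] with s hs
  exact le_trans htb.le (hmono ht0 (le_trans ht0 hs) hs)
end

section
/- Let (f_n) be a sequence in C([0,∞), ℝ) converging uniformly on compacts to f, and let (a_n) be a sequence of continuous nondecreasing functions converging uniformly on compacts to a continuous nondecreasing function a. Then for all 0 ≤ t ≤ t+s, ∫_t^{t+s} f_n(u) da_n(u) → ∫_t^{t+s} f(u) da(u), where the integrals are Lebesgue–Stieltjes integrals. -/
open Set Filter MeasureTheory

private lemma stieltjes_noAtoms (B : StieltjesFunction ℝ) (hB : Continuous B) :
    MeasureTheory.NoAtoms B.measure := by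
  constructor
  intro a
  rw [StieltjesFunction.measure_singleton]
  have : Function.leftLim B a = B a :=
    (B.mono.continuousWithinAt_Iio_iff_leftLim_eq).1
      (hB.continuousAt.continuousWithinAt)
  rw [this, sub_self, ENNReal.ofReal_zero]

private lemma key_step (B : StieltjesFunction ℝ) (g : ℝ → ℝ) (hg : Continuous g)
    (x : ℕ → ℝ) (hx : Monotone x) (k : ℕ) (ε : ℝ)
    (hstep : ∀ i < k, ∀ u ∈ Set.Ioc (x i) (x (i + 1)), |g u - g (x i)| ≤ ε) :
    |(∫ u in Set.Ioc (x 0) (x k), g u ∂B.measure)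
      - ∑ i ∈ Finset.range k, g (x i) * (B (x (i + 1)) - B (x i))|
      ≤ ε * (B (x k) - B (x 0)) := by
  have hint : ∀ a b : ℝ, IntervalIntegrable g B.measure a b := fun a b =>
    hg.intervalIntegrable a b
  have h1 : (∫ u in Set.Ioc (x 0) (x k), g u ∂B.measure)
      = ∑ i ∈ Finset.range k, ∫ u in Set.Ioc (x i) (x (i + 1)), g u ∂B.measure := by
    rw [← intervalIntegral.integral_of_le (hx (Nat.zero_le k)),
      ← intervalIntegral.sum_integral_adjacent_intervals (fun i _ => hint _ _)]
    refine Finset.sum_congr rfl fun i _ => ?_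
    rw [intervalIntegral.integral_of_le (hx (Nat.le_succ i))]
  rw [h1, ← Finset.sum_sub_distrib]
  calc |∑ i ∈ Finset.range k, ((∫ u in Set.Ioc (x i) (x (i + 1)), g u ∂B.measure)
          - g (x i) * (B (x (i + 1)) - B (x i)))|
      ≤ ∑ i ∈ Finset.range k, |(∫ u in Set.Ioc (x i) (x (i + 1)), g u ∂B.measure)
          - g (x i) * (B (x (i + 1)) - B (x i))| := Finset.abs_sum_le_sum_abs _ _
    _ ≤ ∑ i ∈ Finset.range k, ε * (B (x (i + 1)) - B (x i)) := by
        refine Finset.sum_le_sum fun i hi => ?_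
        have hi' : i < k := Finset.mem_range.1 hi
        have hm : B (x i) ≤ B (x (i + 1)) := B.mono (hx (Nat.le_succ i))
        have hfin : B.measure (Set.Ioc (x i) (x (i + 1))) < ⊤ := by
          rw [StieltjesFunction.measure_Ioc]; exact ENNReal.ofReal_lt_top
        have hμ : (B.measure (Set.Ioc (x i) (x (i + 1)))).toReal
            = B (x (i + 1)) - B (x i) := by
          rw [StieltjesFunction.measure_Ioc, ENNReal.toReal_ofReal (by linarith)]
        have hconst : g (x i) * (B (x (i + 1)) - B (x i))
            = ∫ _ in Set.Ioc (x i) (x (i + 1)), g (x i) ∂B.measure := by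
          rw [setIntegral_const, measureReal_def, hμ, smul_eq_mul, mul_comm]
        have hig : IntegrableOn g (Set.Ioc (x i) (x (i + 1))) B.measure :=
          (hint (x i) (x (i + 1))).1
        have hic : IntegrableOn (fun _ => g (x i)) (Set.Ioc (x i) (x (i + 1))) B.measure :=
          integrableOn_const hfin.ne
        rw [hconst, ← integral_sub hig hic]
        have := norm_setIntegral_le_of_norm_le_const_ae' hfin
          (C := ε) (f := fun u => g u - g (x i))
          (Filter.Eventually.of_forall fun u hu => by
            rw [Real.norm_eq_abs]; exact hstep i hi' u hu)
        rw [Real.norm_eq_abs, measureReal_def, hμ] at this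
        exact this
    _ = ε * (B (x k) - B (x 0)) := by
        rw [← Finset.mul_sum, Finset.sum_range_sub (fun i => B (x i))]

/-- convergence of Lebesgue–Stieltjes integrals
`∫_t^{t+s} f_n da_n → ∫_t^{t+s} f da` when `f_n → f` and `a_n → a` uniformly
on compacts, with `a_n, a` continuous and nondecreasing. -/
theorem stmt_11 (An : ℕ → StieltjesFunction ℝ) (A : StieltjesFunction ℝ)
    (hAncont : ∀ n, Continuous (An n)) (hAcont : Continuous A)
    (fn : ℕ → ℝ → ℝ) (f : ℝ → ℝ)
    (hfncont : ∀ n, Continuous (fn n)) (hfcont : Continuous f)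
    (hfconv : TendstoLocallyUniformly fn f atTop)
    (hAconv : TendstoLocallyUniformly (fun n => ⇑(An n)) (⇑A) atTop) :
    ∀ t s : ℝ, 0 ≤ t → 0 ≤ s →
      Tendsto (fun n => ∫ u in Icc t (t + s), fn n u ∂(An n).measure) atTop
        (nhds (∫ u in Icc t (t + s), f u ∂A.measure)) := by
  intro t s ht hs
  set b := t + s with hbdef
  have htb : t ≤ b := by linarith
  -- replace Icc by Ioc
  have hIcc : ∀ (B : StieltjesFunction ℝ), Continuous B → ∀ g : ℝ → ℝ,
      (∫ u in Icc t b, g u ∂B.measure) = ∫ u in Ioc t b, g u ∂B.measure := by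
    intro B hB g
    haveI : NullSingletonClass B.measure := stieltjes_noAtoms B hB
    exact (setIntegral_congr_set Ioc_ae_eq_Icc).symm
  rw [hIcc A hAcont f]
  simp only [fun n => hIcc (An n) (hAncont n) (fn n)]
  -- the constant
  set M : ℝ := A b - A t with hMdef
  have hM : 0 ≤ M := by have := A.mono htb; simp [hMdef]; linarith
  set C : ℝ := 3 * M + 4 with hCdef
  have hC : 0 < C := by positivity
  -- main eventual estimate
  have main : ∀ ε : ℝ, 0 < ε → ∀ᶠ n in atTop,
      |(∫ u in Ioc t b, fn n u ∂(An n).measure) - ∫ u in Ioc t b, f u ∂A.measure|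
        ≤ ε * C := by
    intro ε hε
    -- uniform continuity of f on Icc t b
    obtain ⟨δ, hδ, hδ'⟩ := Metric.uniformContinuousOn_iff_le.1
      (isCompact_Icc.uniformContinuousOn_of_continuous (hfcont.continuousOn)
        : UniformContinuousOn f (Icc t b)) ε hε
    -- choose the partition
    obtain ⟨k0, hk0⟩ := exists_nat_gt ((b - t) / δ)
    set k : ℕ := k0 + 1 with hkdef
    have hkpos : (0 : ℝ) < k := by positivity
    have hmesh : (b - t) / k < δ := by
      rw [div_lt_iff₀ hkpos]
      have : (b - t) / δ < k := lt_of_le_of_lt (le_of_lt hk0) (by exact_mod_cast Nat.lt_succ_self k0)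
      calc b - t = ((b - t) / δ) * δ := by field_simp
        _ < k * δ := by
            apply mul_lt_mul_of_pos_right this hδ
        _ = δ * k := mul_comm _ _
    set x : ℕ → ℝ := fun i => t + i * ((b - t) / k) with hxdef
    have hmesh0 : 0 ≤ (b - t) / k := div_nonneg (by linarith) hkpos.le
    have hxmono : Monotone x := by
      intro i j hij
      simp only [hxdef]
      have : (i : ℝ) ≤ j := by exact_mod_cast hij
      nlinarith
    have hx0 : x 0 = t := by simp [hxdef]
    have hxk : x k = b := by
      simp only [hxdef]
      field_simp
      ring
    have hxmem : ∀ i ≤ k, x i ∈ Icc t b := by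
      intro i hi
      constructor
      · rw [← hx0]; exact hxmono (Nat.zero_le i)
      · rw [← hxk]; exact hxmono hi
    -- step estimate for f
    have hstep : ∀ i < k, ∀ u ∈ Set.Ioc (x i) (x (i + 1)), |f u - f (x i)| ≤ ε := by
      intro i hi u hu
      have hi1 : i + 1 ≤ k := hi
      have hxi : x i ∈ Icc t b := hxmem i (le_of_lt hi)
      have hxi1 : x (i + 1) ∈ Icc t b := hxmem (i + 1) hi1
      have humem : u ∈ Icc t b := ⟨le_trans hxi.1 (le_of_lt hu.1), le_trans hu.2 hxi1.2⟩
      have hdist : dist u (x i) ≤ δ := by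
        rw [Real.dist_eq, abs_of_nonneg (by linarith [hu.1.le])]
        have : x (i + 1) - x i = (b - t) / k := by
          simp only [hxdef]; push_cast; ring
        have h2 : u - x i ≤ (b - t) / k := by
          rw [← this]; linarith [hu.2]
        exact le_trans (by linarith [hu.1.le] : u - x i ≤ u - x i) (le_trans h2 hmesh.le)
      have := hδ' u humem (x i) hxi hdist
      rw [Real.dist_eq] at this
      exact this
    -- the approximating sums
    set S : ℝ := ∑ i ∈ Finset.range k, f (x i) * (A (x (i + 1)) - A (x i)) with hSdef
    set Sn : ℕ → ℝ := fun n => ∑ i ∈ Finset.range k, f (x i) * (An n (x (i + 1)) - An n (x i))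
      with hSndef
    -- key estimates
    have hA : |(∫ u in Ioc t b, f u ∂A.measure) - S| ≤ ε * M := by
      have := key_step A f hfcont x hxmono k ε hstep
      rw [hx0, hxk] at this
      exact this
    have hAn : ∀ n, |(∫ u in Ioc t b, f u ∂(An n).measure) - Sn n|
        ≤ ε * (An n b - An n t) := by
      intro n
      have := key_step (An n) f hfcont x hxmono k ε hstep
      rw [hx0, hxk] at this
      exact this
    -- eventual facts
    have hptwise : ∀ y : ℝ, Tendsto (fun n => An n y) atTop (nhds (A y)) := fun y =>
      hAconv.tendstoLocallyUniformlyOn.tendsto_at (Set.mem_univ y)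
    have hSconv : Tendsto Sn atTop (nhds S) := by
      refine tendsto_finset_sum _ fun i _ => ?_
      exact (tendsto_const_nhds.mul ((hptwise _).sub (hptwise _)))
    have ev1 : ∀ᶠ n in atTop, |Sn n - S| ≤ ε := by
      have := Metric.tendsto_nhds.1 hSconv ε hε
      filter_upwards [this] with n hn
      rw [Real.dist_eq] at hn; exact hn.le
    have ev2 : ∀ᶠ n in atTop, An n b - An n t ≤ M + 1 := by
      have h1 := Metric.tendsto_nhds.1 (hptwise b) (1/2) (by norm_num)
      have h2 := Metric.tendsto_nhds.1 (hptwise t) (1/2) (by norm_num)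
      filter_upwards [h1, h2] with n hn1 hn2
      rw [Real.dist_eq, abs_lt] at hn1 hn2
      simp only [hMdef]
      linarith [hn1.1, hn1.2, hn2.1, hn2.2]
    have ev3 : ∀ᶠ n in atTop, ∀ u ∈ Icc t b, |fn n u - f u| ≤ ε := by
      have hcompact : TendstoUniformlyOn fn f atTop (Icc t b) :=
        (tendstoLocallyUniformly_iff_forall_isCompact.1 hfconv) _ isCompact_Icc
      have := Metric.tendstoUniformlyOn_iff.1 hcompact ε hε
      filter_upwards [this] with n hn u hu
      have := hn u hu
      rw [Real.dist_eq, abs_sub_comm] at this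
      exact this.le
    filter_upwards [ev1, ev2, ev3] with n h1 h2 h3
    -- Term 1: |∫ fn - ∫ f dμn|
    have hμn : ((An n).measure (Ioc t b)).toReal = An n b - An n t := by
      rw [StieltjesFunction.measure_Ioc,
        ENNReal.toReal_ofReal (by linarith [(An n).mono htb])]
    have hfin : (An n).measure (Ioc t b) < ⊤ := by
      rw [StieltjesFunction.measure_Ioc]; exact ENNReal.ofReal_lt_top
    have hT1 : |(∫ u in Ioc t b, fn n u ∂(An n).measure)
        - ∫ u in Ioc t b, f u ∂(An n).measure| ≤ ε * (An n b - An n t) := by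
      rw [← integral_sub ((hfncont n).intervalIntegrable t b).1
        (hfcont.intervalIntegrable t b).1]
      have := norm_setIntegral_le_of_norm_le_const_ae' hfin
        (C := ε) (f := fun u => fn n u - f u)
        (Filter.Eventually.of_forall fun u hu => by
          rw [Real.norm_eq_abs]
          exact h3 u (Ioc_subset_Icc_self hu))
      rw [Real.norm_eq_abs, measureReal_def, hμn] at this
      exact this
    have hAnle : An n b - An n t ≤ M + 1 := h2
    have hAnn := hAn n
    have hεAn : ε * (An n b - An n t) ≤ ε * (M + 1) :=
      mul_le_mul_of_nonneg_left hAnle hε.le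
    have hεM : ε * M ≤ ε * (M + 1) := by nlinarith
    calc |(∫ u in Ioc t b, fn n u ∂(An n).measure) - ∫ u in Ioc t b, f u ∂A.measure|
        ≤ |(∫ u in Ioc t b, fn n u ∂(An n).measure)
            - ∫ u in Ioc t b, f u ∂(An n).measure|
          + |(∫ u in Ioc t b, f u ∂(An n).measure) - Sn n|
          + |Sn n - S|
          + |S - ∫ u in Ioc t b, f u ∂A.measure| := by
            set a1 := ∫ u in Ioc t b, fn n u ∂(An n).measure
            set a2 := ∫ u in Ioc t b, f u ∂(An n).measure
            set a3 := ∫ u in Ioc t b, f u ∂A.measure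
            have e1 := abs_sub_le a1 a2 a3
            have e2 := abs_sub_le a2 (Sn n) a3
            have e3 := abs_sub_le (Sn n) S a3
            linarith
      _ ≤ ε * (M + 1) + ε * (M + 1) + ε + ε * (M + 1) := by
          have h4 : |S - ∫ u in Ioc t b, f u ∂A.measure| ≤ ε * M := by
            rw [abs_sub_comm]; exact hA
          exact add_le_add (add_le_add (add_le_add (hT1.trans hεAn)
            (hAnn.trans hεAn)) h1) (h4.trans hεM)
      _ = ε * C := by simp only [hCdef]; ring
  -- conclude
  rw [Metric.tendsto_nhds]
  intro ε0 hε0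
  have hε : 0 < ε0 / (2 * C) := by positivity
  filter_upwards [main _ hε] with n hn
  rw [Real.dist_eq]
  calc |(∫ u in Ioc t b, fn n u ∂(An n).measure) - ∫ u in Ioc t b, f u ∂A.measure|
      ≤ ε0 / (2 * C) * C := hn
    _ = ε0 / 2 := by field_simp
    _ < ε0 := by linarith
end

section
/- Let (g_n) be a sequence of nonnegative continuous functions on [0,∞) converging pointwise (uniformly on compacts) to g, and let (a_n) be continuous nondecreasing functions converging uniformly on compacts to a continuous nondecreasing a. Then liminf_{n→∞} ∫_0^∞ g_n(u) da_n(u) ≥ ∫_0^∞ g(u) da(u). -/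
open Set Filter MeasureTheory Topology
open scoped ENNReal NNReal

private lemma sup_Icc_lintegral (μ : Measure ℝ) (f : ℝ → ℝ≥0∞) (hf : Measurable f) :
    ∫⁻ u in Ici (0 : ℝ), f u ∂μ = ⨆ M : ℕ, ∫⁻ u in Icc (0 : ℝ) M, f u ∂μ := by
  have h1 : ∀ M : ℕ, ∫⁻ u in Icc (0 : ℝ) M, f u ∂μ
      = ∫⁻ u, (Icc (0 : ℝ) M).indicator f u ∂μ :=
    fun M => (lintegral_indicator measurableSet_Icc f).symm
  have h2 : ∫⁻ u in Ici (0 : ℝ), f u ∂μ = ∫⁻ u, (Ici (0 : ℝ)).indicator f u ∂μ :=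
    (lintegral_indicator measurableSet_Ici f).symm
  rw [h2]
  simp_rw [h1]
  rw [← lintegral_iSup]
  · congr 1
    ext u
    by_cases hu : u ∈ Ici (0 : ℝ)
    · obtain ⟨M, hM⟩ := exists_nat_ge u
      apply le_antisymm
      · rw [Set.indicator_of_mem hu]
        calc f u = (Icc (0 : ℝ) (M : ℝ)).indicator f u :=
              (Set.indicator_of_mem (show u ∈ Icc (0 : ℝ) (M : ℝ) from ⟨hu, hM⟩) f).symm
          _ ≤ ⨆ N : ℕ, (Icc (0 : ℝ) (N : ℝ)).indicator f u :=
              le_iSup (fun N : ℕ => (Icc (0 : ℝ) (N : ℝ)).indicator f u) M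
      · exact iSup_le fun N =>
          Set.indicator_le_indicator_of_subset Icc_subset_Ici_self (fun _ => zero_le) u
    · have hu' : ∀ N : ℕ, u ∉ Icc (0 : ℝ) N := fun N h => hu h.1
      simp [Set.indicator_of_notMem hu, Set.indicator_of_notMem (hu' _)]
  · exact fun M => hf.indicator measurableSet_Icc
  · intro i j hij u
    exact indicator_le_indicator_of_subset (Icc_subset_Icc le_rfl (by exact_mod_cast hij))
      (fun _ => zero_le) u

/-- Fatou-type lower semicontinuity for Lebesgue–Stieltjes
integrals: if `g_n ≥ 0` converge to `g` uniformly on compacts and the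
continuous nondecreasing `a_n` (with `a_n(0) = 0`) converge to `a` uniformly
on compacts, then `liminf ∫_0^∞ g_n da_n ≥ ∫_0^∞ g da`. -/
theorem stmt_12 (An : ℕ → StieltjesFunction ℝ) (A : StieltjesFunction ℝ)
    (hAncont : ∀ n, Continuous (An n)) (hAcont : Continuous A)
    (hAn0 : ∀ n, An n 0 = 0) (hA0 : A 0 = 0)
    (gn : ℕ → ℝ → ℝ) (g : ℝ → ℝ)
    (hgncont : ∀ n, Continuous (gn n)) (hgcont : Continuous g)
    (hgnnn : ∀ n u, 0 ≤ gn n u) (hgnn : ∀ u, 0 ≤ g u)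
    (hgconv : TendstoLocallyUniformly gn g atTop)
    (hAconv : TendstoLocallyUniformly (fun n => ⇑(An n)) (⇑A) atTop) :
    ∫⁻ u in Ici (0 : ℝ), ENNReal.ofReal (g u) ∂A.measure ≤
      Filter.liminf (fun n =>
        ∫⁻ u in Ici (0 : ℝ), ENNReal.ofReal (gn n u) ∂(An n).measure) atTop := by
  set L := Filter.liminf (fun n =>
      ∫⁻ u in Ici (0 : ℝ), ENNReal.ofReal (gn n u) ∂(An n).measure) atTop with hL
  -- pointwise convergence of An
  have hAt : ∀ x : ℝ, Tendsto (fun n => An n x) atTop (𝓝 (A x)) := fun x =>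
    (tendstoLocallyUniformlyOn_univ.2 hAconv).tendsto_at (mem_univ x)
  have hfmeas : Measurable fun u => ENNReal.ofReal (g u) :=
    ENNReal.measurable_ofReal.comp hgcont.measurable
  -- key estimate on compact intervals
  have key : ∀ m : ℝ, 0 < m →
      ∫⁻ u in Icc (0 : ℝ) m, ENNReal.ofReal (g u) ∂A.measure ≤ L := by
    intro m hm
    have hAm0 : 0 ≤ A m := by
      have := A.mono hm.le
      rw [hA0] at this; exact this
    apply ENNReal.le_of_forall_pos_le_add
    intro ε hε _
    set c : ℝ := A m + 1 with hc
    have hc0 : (0 : ℝ) < c := by linarith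
    set ε' : ℝ := (ε : ℝ) / (3 * c) with hε'def
    have hε'0 : 0 < ε' := div_pos (by exact_mod_cast hε) (by linarith)
    -- uniform continuity of g on Icc 0 m
    obtain ⟨δ, hδ, hδg⟩ := Metric.uniformContinuousOn_iff.1
      (isCompact_Icc.uniformContinuousOn_of_continuous
        (hgcont.continuousOn : ContinuousOn g (Icc (0 : ℝ) m))) ε' hε'0
    obtain ⟨k, hk⟩ := exists_nat_gt (m / δ)
    have hk0 : 0 < k := by
      have h1 : (0 : ℝ) < k := lt_trans (div_pos hm hδ) hk
      exact_mod_cast h1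
    have hk0' : (0 : ℝ) < k := by exact_mod_cast hk0
    set η : ℝ := m / k with hηdef
    have hη0 : 0 < η := div_pos hm hk0'
    have hηδ : η < δ := by
      rw [hηdef, div_lt_iff₀ hk0']
      have := (div_lt_iff₀ hδ).1 hk
      nlinarith
    set t : ℕ → ℝ := fun i => i * η with htdef
    have htmono : Monotone t := fun i j hij => by
      have : (i : ℝ) ≤ j := by exact_mod_cast hij
      exact mul_le_mul_of_nonneg_right this hη0.le
    have ht0 : t 0 = 0 := by simp [htdef]
    have htk : t k = m := by
      simp only [htdef, hηdef]; field_simp [hk0'.ne']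
    have htmem : ∀ i ≤ k, t i ∈ Icc (0 : ℝ) m := by
      intro i hi
      refine ⟨by positivity, ?_⟩
      rw [← htk]; exact htmono hi
    have hstep : ∀ i : ℕ, t (i + 1) - t i = η := by
      intro i; simp only [htdef]; push_cast; ring
    -- decomposition of Ioc 0 m
    have hunion : ∀ n : ℕ, (⋃ i ∈ Finset.range n, Ioc (t i) (t (i + 1))) = Ioc (t 0) (t n) := by
      intro n
      induction n with
      | zero => simp
      | succ n ih =>
        rw [Finset.range_add_one, Finset.set_biUnion_insert, ih, Set.union_comm,
          Set.Ioc_union_Ioc_eq_Ioc (htmono (Nat.zero_le n)) (htmono (Nat.le_succ n))]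
    have hdisj : (↑(Finset.range k) : Set ℕ).PairwiseDisjoint
        (fun i => Ioc (t i) (t (i + 1))) := by
      intro i _ j _ hij
      rcases lt_or_gt_of_ne hij with h | h
      · refine Set.Ioc_disjoint_Ioc.2 ?_
        exact le_trans (min_le_left _ _)
          (le_trans (htmono (Nat.succ_le_of_lt h)) (le_max_right _ _))
      · refine (Set.Ioc_disjoint_Ioc.2 ?_).symm
        exact le_trans (min_le_left _ _)
          (le_trans (htmono (Nat.succ_le_of_lt h)) (le_max_right _ _))
    have hpieceIcc : ∀ i, i < k → Ioc (t i) (t (i + 1)) ⊆ Icc (0 : ℝ) m := by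
      intro i hi
      refine subset_trans Ioc_subset_Icc_self (Icc_subset_Icc ?_ ?_)
      · exact (htmem i hi.le).1
      · exact (htmem (i + 1) hi).2
    have hclose : ∀ i, i < k → ∀ u ∈ Ioc (t i) (t (i + 1)),
        |g u - g (t (i + 1))| < ε' := by
      intro i hi u hu
      have hum : u ∈ Icc (0 : ℝ) m := hpieceIcc i hi hu
      have htm : t (i + 1) ∈ Icc (0 : ℝ) m := htmem (i + 1) hi
      have hd : dist u (t (i + 1)) < δ := by
        rw [Real.dist_eq, abs_sub_lt_iff]
        constructor
        · linarith [hu.2, hη0, hηδ]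
        · have := hu.1
          have := hstep i
          linarith [hηδ]
      have := hδg u hum (t (i + 1)) htm hd
      rwa [Real.dist_eq] at this
    set C : ℕ → ℝ≥0∞ := fun i => ENNReal.ofReal (g (t (i + 1)) - 2 * ε') with hCdef
    set D : ℕ → ℝ≥0∞ := fun i => ENNReal.ofReal (A (t (i + 1)) - A (t i)) with hDdef
    -- singleton has measure zero
    have hzero : A.measure {(0 : ℝ)} = 0 := by
      rw [A.measure_singleton]
      have hll : Function.leftLim A 0 = A 0 := by
        apply leftLim_eq_of_tendsto
        · exact (hAcont.tendsto 0).mono_left nhdsWithin_le_nhds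
      rw [hll, sub_self, ENNReal.ofReal_zero]
    -- upper estimate
    have upper : ∫⁻ u in Icc (0 : ℝ) m, ENNReal.ofReal (g u) ∂A.measure ≤
        ∑ i ∈ Finset.range k, (C i + ENNReal.ofReal (3 * ε')) * D i := by
      have hIcc : Icc (0 : ℝ) m = {(0 : ℝ)} ∪ Ioc 0 m := by
        rw [Set.union_comm, Set.Ioc_union_left hm.le]
      calc ∫⁻ u in Icc (0 : ℝ) m, ENNReal.ofReal (g u) ∂A.measure
          ≤ (∫⁻ u in {(0 : ℝ)}, ENNReal.ofReal (g u) ∂A.measure)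
            + ∫⁻ u in Ioc (0 : ℝ) m, ENNReal.ofReal (g u) ∂A.measure := by
            rw [hIcc]; exact lintegral_union_le _ _ _
        _ = ∫⁻ u in Ioc (0 : ℝ) m, ENNReal.ofReal (g u) ∂A.measure := by
            rw [setLIntegral_measure_zero _ _ hzero, zero_add]
        _ = ∑ i ∈ Finset.range k,
            ∫⁻ u in Ioc (t i) (t (i + 1)), ENNReal.ofReal (g u) ∂A.measure := by
            rw [← ht0, ← htk, ← hunion k,
              lintegral_biUnion_finset hdisj (fun _ _ => measurableSet_Ioc)]
        _ ≤ ∑ i ∈ Finset.range k, (C i + ENNReal.ofReal (3 * ε')) * D i := by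
            apply Finset.sum_le_sum
            intro i hi
            have hik : i < k := Finset.mem_range.1 hi
            have hbound : ∀ u ∈ Ioc (t i) (t (i + 1)),
                ENNReal.ofReal (g u) ≤ C i + ENNReal.ofReal (3 * ε') := by
              intro u hu
              have h2 := hclose i hik u hu
              have hgu : g u ≤ (g (t (i + 1)) - 2 * ε') + 3 * ε' := by
                have := abs_lt.1 h2
                linarith [this.1, this.2]
              calc ENNReal.ofReal (g u)
                  ≤ ENNReal.ofReal ((g (t (i + 1)) - 2 * ε') + 3 * ε') :=
                    ENNReal.ofReal_le_ofReal hgu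
                _ ≤ C i + ENNReal.ofReal (3 * ε') := ENNReal.ofReal_add_le
            calc ∫⁻ u in Ioc (t i) (t (i + 1)), ENNReal.ofReal (g u) ∂A.measure
                ≤ ∫⁻ _ in Ioc (t i) (t (i + 1)),
                    (C i + ENNReal.ofReal (3 * ε')) ∂A.measure :=
                  setLIntegral_mono' measurableSet_Ioc hbound
              _ = (C i + ENNReal.ofReal (3 * ε')) * A.measure (Ioc (t i) (t (i + 1))) :=
                  setLIntegral_const _ _
              _ = (C i + ENNReal.ofReal (3 * ε')) * D i := by
                  rw [A.measure_Ioc]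
    -- lower estimate, eventually in n
    have hgU : TendstoUniformlyOn gn g atTop (Icc (0 : ℝ) m) :=
      (tendstoLocallyUniformlyOn_iff_tendstoUniformlyOn_of_compact isCompact_Icc).1
        ((tendstoLocallyUniformlyOn_univ.2 hgconv).mono (subset_univ _))
    have hev : ∀ᶠ n in atTop, ∀ u ∈ Icc (0 : ℝ) m, dist (g u) (gn n u) < ε' :=
      Metric.tendstoUniformlyOn_iff.1 hgU ε' hε'0
    have lower : ∀ᶠ n in atTop,
        (∑ i ∈ Finset.range k, C i * ENNReal.ofReal (An n (t (i + 1)) - An n (t i))) ≤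
          ∫⁻ u in Ici (0 : ℝ), ENNReal.ofReal (gn n u) ∂(An n).measure := by
      filter_upwards [hev] with n hn
      have e1 : ∀ i ∈ Finset.range k,
          C i * ENNReal.ofReal (An n (t (i + 1)) - An n (t i)) ≤
            ∫⁻ u in Ioc (t i) (t (i + 1)), ENNReal.ofReal (gn n u) ∂(An n).measure := by
        intro i hi
        have hik : i < k := Finset.mem_range.1 hi
        rw [← (An n).measure_Ioc, ← setLIntegral_const]
        apply setLIntegral_mono' measurableSet_Ioc
        intro u hu
        have h1 := hn u (hpieceIcc i hik hu)
        rw [Real.dist_eq] at h1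
        have h2 := hclose i hik u hu
        have h1' := abs_lt.1 h1
        have h2' := abs_lt.1 h2
        apply ENNReal.ofReal_le_ofReal
        linarith [h1'.1, h1'.2, h2'.1, h2'.2]
      calc (∑ i ∈ Finset.range k, C i * ENNReal.ofReal (An n (t (i + 1)) - An n (t i)))
          ≤ ∑ i ∈ Finset.range k,
              ∫⁻ u in Ioc (t i) (t (i + 1)), ENNReal.ofReal (gn n u) ∂(An n).measure :=
            Finset.sum_le_sum e1
        _ = ∫⁻ u in ⋃ i ∈ Finset.range k, Ioc (t i) (t (i + 1)),
              ENNReal.ofReal (gn n u) ∂(An n).measure :=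
            (lintegral_biUnion_finset hdisj (fun _ _ => measurableSet_Ioc) _).symm
        _ ≤ ∫⁻ u in Ici (0 : ℝ), ENNReal.ofReal (gn n u) ∂(An n).measure := by
            apply lintegral_mono_set
            rw [hunion k, ht0]
            exact fun u hu => le_of_lt hu.1
    -- limit of the lower-bound sums
    have hlim : Tendsto
        (fun n => ∑ i ∈ Finset.range k, C i * ENNReal.ofReal (An n (t (i + 1)) - An n (t i)))
        atTop (𝓝 (∑ i ∈ Finset.range k, C i * D i)) := by
      apply tendsto_finset_sum
      intro i _
      have h1 : Tendsto (fun n => An n (t (i + 1)) - An n (t i)) atTop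
          (𝓝 (A (t (i + 1)) - A (t i))) := (hAt _).sub (hAt _)
      have h2 : Tendsto (fun n => ENNReal.ofReal (An n (t (i + 1)) - An n (t i))) atTop
          (𝓝 (ENNReal.ofReal (A (t (i + 1)) - A (t i)))) :=
        (ENNReal.continuous_ofReal.tendsto _).comp h1
      exact ENNReal.Tendsto.const_mul h2 (Or.inr ENNReal.ofReal_ne_top)
    have hliminf : (∑ i ∈ Finset.range k, C i * D i) ≤ L := by
      have h := liminf_le_liminf lower
      rwa [hlim.liminf_eq] at h
    -- sum of D
    have hsumD : ∑ i ∈ Finset.range k, D i = ENNReal.ofReal (A m) := by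
      have : ∀ i ∈ Finset.range k, (0 : ℝ) ≤ A (t (i + 1)) - A (t i) := by
        intro i _
        have := A.mono (htmono (Nat.le_succ i))
        linarith
      rw [hDdef, ← ENNReal.ofReal_sum_of_nonneg this,
        Finset.sum_range_sub (fun i => A (t i)), ht0, htk, hA0, sub_zero]
    have hεbound : ENNReal.ofReal (3 * ε') * ∑ i ∈ Finset.range k, D i ≤ (ε : ℝ≥0∞) := by
      rw [hsumD, ← ENNReal.ofReal_mul (by positivity)]
      have h3 : 3 * ε' * A m ≤ (ε : ℝ) := by
        have h1 : 3 * ε' * c = (ε : ℝ) := by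
          rw [hε'def]; field_simp
        nlinarith [hε'0.le, hAm0]
      calc ENNReal.ofReal (3 * ε' * A m) ≤ ENNReal.ofReal (ε : ℝ) :=
            ENNReal.ofReal_le_ofReal h3
        _ = (ε : ℝ≥0∞) := ENNReal.ofReal_coe_nnreal
    calc ∫⁻ u in Icc (0 : ℝ) m, ENNReal.ofReal (g u) ∂A.measure
        ≤ ∑ i ∈ Finset.range k, (C i + ENNReal.ofReal (3 * ε')) * D i := upper
      _ = (∑ i ∈ Finset.range k, C i * D i)
          + ENNReal.ofReal (3 * ε') * ∑ i ∈ Finset.range k, D i := by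
          rw [Finset.mul_sum, ← Finset.sum_add_distrib]
          congr 1; ext i; rw [add_mul]
      _ ≤ L + (ε : ℝ≥0∞) := add_le_add hliminf hεbound
  -- conclude by monotone convergence over Icc 0 M
  rw [sup_Icc_lintegral _ _ hfmeas]
  refine iSup_le fun M => ?_
  refine le_trans (lintegral_mono_set ?_) (key (M + 1) (by positivity))
  exact Icc_subset_Icc le_rfl (by push_cast; linarith)
end

section
/- Let 𝒲 ⊂ ℝ^k be a closed convex cone with v·v̂₁ ≥ a₀|v| for all v ∈ 𝒲 for some unit vector v̂₁ and a₀ > 0, and let G𝒰 ⊂ ℝ^k be a cone with the same property (same v̂₁, a₀). If w ∈ 𝒲, φ : [0,∞) → ℝ^k is any function, ξ : [0,∞) → ℝ^k has increments in G𝒰, and W(t) = w + φ(t) + ξ(t) ∈ 𝒲 for all t ∈ [0,T], then there is a constant c depending only on a₀ such that for all 0 ≤ t ≤ T: |ξ(t)| + |W(t)| ≤ c(|w| + |W(T)| + sup_{0≤s≤T}|φ(s)|). -/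
open Set Filter

/-- a bound `|ξ(t)| + |W(t)| ≤ c(|w| + |W(T)| + sup_{[0,T]}|φ|)`
for `W = w + φ + ξ` with values in the cone `𝒲` and `ξ` with increments in the
cone `G𝒰`, with a constant `c` depending only on `a₀`. -/
theorem stmt_16 (a0 : ℝ) (ha0 : 0 < a0) :
    ∃ c : ℝ, 0 < c ∧
      ∀ (k : ℕ) (𝒲 GU : Set (EuclideanSpace ℝ (Fin k)))
        (v1 : EuclideanSpace ℝ (Fin k)), ‖v1‖ = 1 →
        (∀ v ∈ 𝒲, a0 * ‖v‖ ≤ (inner ℝ v v1 : ℝ)) →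
        (∀ v ∈ GU, a0 * ‖v‖ ≤ (inner ℝ v v1 : ℝ)) →
        ∀ (w : EuclideanSpace ℝ (Fin k))
          (φ ξ W : ℝ → EuclideanSpace ℝ (Fin k)) (T : ℝ),
          0 ≤ T → w ∈ 𝒲 → ξ 0 ∈ GU →
          (∀ s t : ℝ, 0 ≤ s → s ≤ t → ξ t - ξ s ∈ GU) →
          (∀ t : ℝ, 0 ≤ t → t ≤ T → W t = w + φ t + ξ t) →
          (∀ t : ℝ, 0 ≤ t → t ≤ T → W t ∈ 𝒲) →
          ∀ Mφ : ℝ, (∀ s : ℝ, 0 ≤ s → s ≤ T → ‖φ s‖ ≤ Mφ) →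
            ∀ t : ℝ, 0 ≤ t → t ≤ T →
              ‖ξ t‖ + ‖W t‖ ≤ c * (‖w‖ + ‖W T‖ + Mφ) := by
  refine ⟨2 / a0 + 1, by positivity, ?_⟩
  intro k 𝒲 GU v1 hv1 h𝒲 hGU w φ ξ W T hT hw hξ0 hinc hWeq hW𝒲 Mφ hMφ t ht htT
  set S : ℝ := ‖w‖ + ‖W T‖ + Mφ with hS
  -- a0 * ‖ξ t‖ ≤ ⟪ξ t, v1⟫
  have h1 : a0 * ‖ξ t‖ ≤ (inner ℝ (ξ t) v1 : ℝ) := by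
    have e : ξ t = ξ 0 + (ξ t - ξ 0) := by abel
    have h0 := hGU _ hξ0
    have hi := hGU _ (hinc 0 t le_rfl ht)
    have htri : ‖ξ t‖ ≤ ‖ξ 0‖ + ‖ξ t - ξ 0‖ := by
      have := norm_add_le (ξ 0) (ξ t - ξ 0); rw [← e] at this; exact this
    calc a0 * ‖ξ t‖ ≤ a0 * (‖ξ 0‖ + ‖ξ t - ξ 0‖) := by nlinarith
      _ ≤ (inner ℝ (ξ 0) v1 : ℝ) + (inner ℝ (ξ t - ξ 0) v1 : ℝ) := by nlinarith
      _ = (inner ℝ (ξ t) v1 : ℝ) := by rw [← inner_add_left]; congr 1; abel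
  -- monotone: ⟪ξ t, v1⟫ ≤ ⟪ξ T, v1⟫
  have h2 : (inner ℝ (ξ t) v1 : ℝ) ≤ (inner ℝ (ξ T) v1 : ℝ) := by
    have hi := hGU _ (hinc t T ht htT)
    have : (0:ℝ) ≤ inner ℝ (ξ T - ξ t) v1 := le_trans (by positivity) hi
    rw [inner_sub_left] at this; linarith
  -- ⟪ξ T, v1⟫ ≤ ‖W T‖ + ‖w‖ + Mφ
  have h3 : (inner ℝ (ξ T) v1 : ℝ) ≤ S := by
    have e : ξ T = W T - w - φ T := by rw [hWeq T hT le_rfl]; abel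
    have cW : (inner ℝ (W T) v1 : ℝ) ≤ ‖W T‖ := by
      have := real_inner_le_norm (W T) v1; rwa [hv1, mul_one] at this
    have cw : -(inner ℝ w v1 : ℝ) ≤ ‖w‖ := by
      have := abs_real_inner_le_norm w v1; rw [hv1, mul_one] at this
      linarith [neg_abs_le (inner ℝ w v1 : ℝ)]
    have cφ : -(inner ℝ (φ T) v1 : ℝ) ≤ Mφ := by
      have := abs_real_inner_le_norm (φ T) v1; rw [hv1, mul_one] at this
      have := hMφ T hT le_rfl
      linarith [neg_abs_le (inner ℝ (φ T) v1 : ℝ)]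
    rw [e, inner_sub_left, inner_sub_left]
    simp only [hS]; linarith
  have hξ : ‖ξ t‖ ≤ S / a0 := by
    rw [le_div_iff₀ ha0]; nlinarith
  have hφt := hMφ t ht htT
  have hWt : ‖W t‖ ≤ ‖w‖ + Mφ + S / a0 := by
    rw [hWeq t ht htT]
    calc ‖w + φ t + ξ t‖ ≤ ‖w + φ t‖ + ‖ξ t‖ := norm_add_le _ _
      _ ≤ ‖w‖ + ‖φ t‖ + ‖ξ t‖ := by linarith [norm_add_le w (φ t)]
      _ ≤ ‖w‖ + Mφ + S / a0 := by linarith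
  have hM0 : 0 ≤ Mφ := le_trans (norm_nonneg _) (hMφ 0 le_rfl hT)
  have hS0 : 0 ≤ S := by simp only [hS]; positivity
  have hwM : ‖w‖ + Mφ ≤ S := by
    simp only [hS]; linarith [norm_nonneg (W T)]
  have hkey : (2 / a0 + 1) * S = 2 * (S / a0) + S := by field_simp
  linarith
end
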